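/- arXiv:2009.07214 — 6 statements merged into one kernel-verified Lean document; each statement's English description precedes it below -/
import Mathlib

section
/- The residue of the function z ↦ e^{a z}/(e^z + 1)^2 at z = iπ equals -(1 - a) e^{i a π}. -/
open Complex

open Metric

/-- The residue of `z ↦ e^{a z}/(e^z + 1)^2` at `z = iπ` is `-(1-a) e^{i a π}`, expressed via
small circle integrals: `∮_{|z - iπ| = r} f = 2πi · Res`. -/
theorem stmt4 (a : ℂ) :
    ∃ ε > 0, ∀ r : ℝ, 0 < r → r < ε →
      circleIntegral (fun z => Complex.exp (a * z) / (Complex.exp z + 1) ^ 2)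
          ((Real.pi : ℂ) * I) r
        = 2 * (Real.pi : ℂ) * I * (-(1 - a) * Complex.exp (I * a * (Real.pi : ℂ))) := by
  set c : ℂ := (Real.pi : ℂ) * I with hc
  set F : ℂ → ℂ := fun z => Complex.exp z + 1 with hF
  set g : ℂ → ℂ := dslope F c with hg
  have hexp : HasFPowerSeriesAt (fun z => NormedSpace.exp (z - c))
      (NormedSpace.expSeries ℂ ℂ) c := by
    have := (NormedSpace.exp_hasFPowerSeriesOnBall (𝕂 := ℂ) (𝔸 := ℂ)).comp_sub c
    rw [zero_add] at this
    exact this.hasFPowerSeriesAt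
  have hFeq : F = (fun _ : ℂ => (1 : ℂ)) - fun z => NormedSpace.exp (z - c) := by
    funext z
    have h1 : Complex.exp z = Complex.exp (z - c) * Complex.exp c := by
      rw [← Complex.exp_add]; ring_nf
    simp only [hF, Pi.sub_apply, ← Complex.exp_eq_exp_ℂ, h1, hc, Complex.exp_pi_mul_I]
    ring
  have hFps : HasFPowerSeriesAt F
      (constFormalMultilinearSeries ℂ ℂ 1 - NormedSpace.expSeries ℂ ℂ) c := by
    rw [hFeq]; exact hasFPowerSeriesAt_const.sub hexp
  set p : FormalMultilinearSeries ℂ ℂ ℂ :=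
    constFormalMultilinearSeries ℂ ℂ 1 - NormedSpace.expSeries ℂ ℂ with hp
  have hgps : HasFPowerSeriesAt g p.fslope c := hFps.has_fpower_series_dslope_fslope
  have hFc : F c = 0 := by simp [hF, hc, Complex.exp_pi_mul_I]
  have hgc : g c = -1 := by
    rw [hg, dslope_same]
    have h2 : HasDerivAt F (Complex.exp c) c := (Complex.hasDerivAt_exp c).add_const 1
    rw [h2.deriv, hc, Complex.exp_pi_mul_I]
  have hderivg : deriv g c = -(1/2 : ℂ) := by
    rw [hgps.deriv]
    show p.fslope.coeff 1 = _
    rw [FormalMultilinearSeries.coeff_fslope]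
    have hsub2 : p 2 = (constFormalMultilinearSeries ℂ ℂ 1) 2 - (NormedSpace.expSeries ℂ ℂ) 2 :=
      rfl
    rw [FormalMultilinearSeries.coeff, hsub2, ContinuousMultilinearMap.sub_apply,
      constFormalMultilinearSeries_apply_of_nonzero (two_ne_zero)]
    have he2 : ((NormedSpace.expSeries ℂ ℂ 2) fun _ => (1 : ℂ)) = ((Nat.factorial 2 : ℂ))⁻¹ • (1 : ℂ) ^ 2 :=
      NormedSpace.expSeries_apply_eq (1 : ℂ) 2
    rw [show ((1 : ∀ _ : Fin 2, ℂ)) = fun _ => (1 : ℂ) from rfl] at *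
    rw [he2]
    norm_num [Nat.factorial]
  have hgd : HasDerivAt g (-(1/2 : ℂ)) c := by
    have := hgps.differentiableAt.hasDerivAt
    rwa [hderivg] at this
  have hgdiff : ∀ z : ℂ, DifferentiableAt ℂ g z := by
    intro z
    rcases eq_or_ne z c with rfl | hne
    · exact hgps.differentiableAt
    · exact (differentiableAt_dslope_of_ne hne).2
        ((Complex.differentiable_exp z).add_const 1)
  have hkey : ∀ z : ℂ, z ≠ c → Complex.exp z + 1 = (z - c) * g z := by
    intro z hzc
    rw [hg, dslope_of_ne F hzc, slope_def_field, hFc, sub_zero, hF]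
    rw [eq_comm, mul_comm, div_mul_cancel₀ _ (sub_ne_zero.2 hzc)]
  have hev : ∀ᶠ z in nhds c, g z ≠ 0 :=
    hgps.differentiableAt.continuousAt.eventually_ne (by rw [hgc]; norm_num)
  obtain ⟨ε, hε, hball⟩ := Metric.eventually_nhds_iff.1 hev
  refine ⟨ε, hε, fun r hr hrε => ?_⟩
  set h : ℂ → ℂ := fun z => Complex.exp (a * z) / g z ^ 2 with hh
  have hgne : ∀ z ∈ closedBall c r, g z ≠ 0 := fun z hz =>
    hball (lt_of_le_of_lt (mem_closedBall.1 hz) hrε)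
  set R : NNReal := ⟨r, hr.le⟩ with hR
  have hRr : (R : ℝ) = r := rfl
  have hRpos : (0 : NNReal) < R := by exact_mod_cast hr
  have hdiffh : DifferentiableOn ℂ h (closedBall c (R : ℝ)) := by
    intro z hz
    have hz0 : g z ≠ 0 := hgne z (by rwa [hRr] at hz)
    exact (((differentiableAt_id.const_mul a).cexp).div ((hgdiff z).pow 2)
      (pow_ne_zero 2 hz0)).differentiableWithinAt
  have hps := hdiffh.hasFPowerSeriesOnBall hRpos
  have hderivh : deriv h c = (cauchyPowerSeries h c (R : ℝ)).coeff 1 :=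
    hps.hasFPowerSeriesAt.deriv
  have hcoeff : (cauchyPowerSeries h c (R : ℝ)).coeff 1
      = (2 * (Real.pi : ℂ) * I)⁻¹ •
        ∮ z in C(c, (R : ℝ)), ((1 : ℂ) / (z - c)) ^ 1 • ((z - c)⁻¹ • h z) :=
    cauchyPowerSeries_apply h c (R : ℝ) 1 1
  have hEq : Set.EqOn (fun z => Complex.exp (a * z) / (Complex.exp z + 1) ^ 2)
      (fun z => ((1 : ℂ) / (z - c)) ^ 1 • ((z - c)⁻¹ • h z)) (sphere c r) := by
    intro z hz
    have hzc : z ≠ c := by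
      intro h0
      rw [mem_sphere, h0, dist_self] at hz
      exact hr.ne hz
    have hz0 : g z ≠ 0 := hgne z (sphere_subset_closedBall hz)
    have hsub : z - c ≠ 0 := sub_ne_zero.2 hzc
    show Complex.exp (a * z) / (Complex.exp z + 1) ^ 2
      = ((1 : ℂ) / (z - c)) ^ 1 • ((z - c)⁻¹ • (Complex.exp (a * z) / g z ^ 2))
    rw [hkey z hzc, smul_eq_mul, smul_eq_mul, pow_one]
    field_simp
  have h2pi : (2 * (Real.pi : ℂ) * I) ≠ 0 := by
    simp [Real.pi_ne_zero, Complex.I_ne_zero, Complex.ofReal_ne_zero]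
  have hnum : HasDerivAt (fun z => Complex.exp (a * z)) (Complex.exp (a * c) * (a * 1)) c :=
    ((hasDerivAt_id c).const_mul a).cexp
  have hden : HasDerivAt (fun z => g z ^ 2) ((2 : ℕ) * g c ^ (2 - 1) * (-(1/2 : ℂ))) c :=
    hgd.pow 2
  have hgc2 : g c ^ 2 ≠ 0 := by rw [hgc]; norm_num
  have hexpeq : Complex.exp (a * c) = Complex.exp (I * a * (Real.pi : ℂ)) := by
    rw [hc]; congr 1; ring
  have hderivh2 : deriv h c = -(1 - a) * Complex.exp (I * a * (Real.pi : ℂ)) := by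
    rw [hh, (hnum.fun_div hden hgc2).deriv, hgc, hexpeq]
    norm_num
    ring
  calc circleIntegral (fun z => Complex.exp (a * z) / (Complex.exp z + 1) ^ 2) c r
      = ∮ z in C(c, r), ((1 : ℂ) / (z - c)) ^ 1 • ((z - c)⁻¹ • h z) :=
        circleIntegral.integral_congr hr.le hEq
    _ = 2 * (Real.pi : ℂ) * I * ((cauchyPowerSeries h c (R : ℝ)).coeff 1) := by
        rw [hcoeff, hRr, smul_eq_mul]
        field_simp
    _ = 2 * (Real.pi : ℂ) * I * (-(1 - a) * Complex.exp (I * a * (Real.pi : ℂ))) := by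
        rw [← hderivh, hderivh2]
end

section
/- The residue of the function z ↦ e^{a z}/(e^z + 1)^3 at z = iπ equals -((2 - a)(1 - a)/2) e^{i a π}. -/
open Complex Metric Filter Set Function

noncomputable section Stmt5Aux

namespace Stmt5Aux

def cc : ℂ := (Real.pi : ℂ) * Complex.I

lemma exp_cc : Complex.exp cc = -1 := Complex.exp_pi_mul_I

lemma analyticAt_dslope {f : ℂ → ℂ} {z : ℂ} (h : AnalyticAt ℂ f z) :
    AnalyticAt ℂ (dslope f z) z := by
  obtain ⟨p, hp⟩ := h
  exact ⟨p.fslope, hp.has_fpower_series_dslope_fslope⟩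

lemma analyticAt_deriv {f : ℂ → ℂ} {z : ℂ} (h : AnalyticAt ℂ f z) :
    AnalyticAt ℂ (deriv f) z := by
  obtain ⟨s, hs, hf⟩ := h.eventually_analyticAt.exists_mem
  exact AnalyticOnNhd.deriv (fun x hx => hf x hx) z (mem_of_mem_nhds hs)

def g : ℂ → ℂ := dslope (fun z => Complex.exp z + 1) cc

lemma analyticAt_g : AnalyticAt ℂ g cc :=
  analyticAt_dslope (analyticAt_cexp.add analyticAt_const)

lemma key : ∀ z, Complex.exp z + 1 = (z - cc) * g z := by
  intro z
  have h := sub_smul_dslope (fun z => Complex.exp z + 1) cc z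
  simp only [smul_eq_mul, exp_cc] at h
  rw [g]; linear_combination -h

lemma g_cc : g cc = -1 := by
  rw [g, dslope_same, ((Complex.hasDerivAt_exp cc).add_const 1).deriv, exp_cc]

/-- first differentiated identity, eventually near cc -/
lemma ev1 : (fun z => Complex.exp z) =ᶠ[nhds cc] (fun z => g z + (z - cc) * deriv g z) := by
  filter_upwards [analyticAt_g.eventually_analyticAt] with z hz
  have hd : HasDerivAt (fun w => (w - cc) * g w) (1 * g z + (z - cc) * deriv g z) z :=
    ((hasDerivAt_id z).sub_const cc).mul hz.differentiableAt.hasDerivAt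
  have e1 : deriv (fun w => Complex.exp w + 1) z = Complex.exp z :=
    ((Complex.hasDerivAt_exp z).add_const 1).deriv
  rw [show (fun w => Complex.exp w + 1) = (fun w => (w - cc) * g w) from funext key] at e1
  rw [hd.deriv] at e1
  linear_combination -e1

lemma ev2 : ∀ᶠ z in nhds cc,
    Complex.exp z = 2 * deriv g z + (z - cc) * deriv (deriv g) z := by
  filter_upwards [ev1.deriv, analyticAt_g.eventually_analyticAt] with z hz1 hz2
  have hdg : AnalyticAt ℂ (deriv g) z := analyticAt_deriv hz2
  have hR : HasDerivAt (fun w => g w + (w - cc) * deriv g w)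
      (deriv g z + (1 * deriv g z + (z - cc) * deriv (deriv g) z)) z :=
    hz2.differentiableAt.hasDerivAt.add
      (((hasDerivAt_id z).sub_const cc).mul hdg.differentiableAt.hasDerivAt)
  rw [hR.deriv, Complex.deriv_exp] at hz1
  linear_combination hz1

lemma ev3 : ∀ᶠ z in nhds cc,
    Complex.exp z = 3 * deriv (deriv g) z + (z - cc) * deriv (deriv (deriv g)) z := by
  have h2 : (fun z => Complex.exp z) =ᶠ[nhds cc]
      (fun z => 2 * deriv g z + (z - cc) * deriv (deriv g) z) := ev2
  filter_upwards [h2.deriv, analyticAt_g.eventually_analyticAt] with z hz1 hz2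
  have hdg : AnalyticAt ℂ (deriv g) z := analyticAt_deriv hz2
  have hddg : AnalyticAt ℂ (deriv (deriv g)) z := analyticAt_deriv hdg
  have hR : HasDerivAt (fun w => 2 * deriv g w + (w - cc) * deriv (deriv g) w)
      (2 * deriv (deriv g) z + (1 * deriv (deriv g) z + (z - cc) * deriv (deriv (deriv g)) z)) z :=
    (hdg.differentiableAt.hasDerivAt.const_mul 2).add
      (((hasDerivAt_id z).sub_const cc).mul hddg.differentiableAt.hasDerivAt)
  rw [hR.deriv, Complex.deriv_exp] at hz1
  linear_combination hz1

lemma deriv_g_cc : deriv g cc = -(1/2) := by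
  have := ev2.self_of_nhds
  rw [exp_cc, sub_self] at this
  linear_combination -this / 2

lemma deriv2_g_cc : deriv (deriv g) cc = -(1/3) := by
  have := ev3.self_of_nhds
  rw [exp_cc, sub_self] at this
  linear_combination -this / 3


def F (a : ℂ) : ℂ → ℂ := fun z => Complex.exp (a * z) / g z ^ 3

lemma analyticAt_F (a : ℂ) : AnalyticAt ℂ (F a) cc := by
  apply AnalyticAt.div
  · exact (analyticAt_const.mul analyticAt_id).cexp
  · exact analyticAt_g.pow 3
  · rw [g_cc]; norm_num

def G (a : ℂ) : ℂ → ℂ := dslope (F a) cc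
def HH (a : ℂ) : ℂ → ℂ := dslope (G a) cc
def KK (a : ℂ) : ℂ → ℂ := dslope (HH a) cc

lemma deriv_F_ev (a : ℂ) : deriv (F a) =ᶠ[nhds cc]
    fun z => (Complex.exp (a * z) * a * g z ^ 3
        - Complex.exp (a * z) * (3 * g z ^ 2 * deriv g z)) / (g z ^ 3) ^ 2 := by
  have hne : ∀ᶠ z in nhds cc, g z ≠ 0 :=
    analyticAt_g.continuousAt.eventually_ne (by rw [g_cc]; norm_num)
  filter_upwards [analyticAt_g.eventually_analyticAt, hne] with z hz hz0
  have hE : HasDerivAt (fun w => Complex.exp (a * w)) (Complex.exp (a * z) * a) z :=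
    by simpa using ((hasDerivAt_id z).const_mul a).cexp
  have hg3 : HasDerivAt (fun w => g w ^ 3) (↑(3:ℕ) * g z ^ 2 * deriv g z) z :=
    hz.differentiableAt.hasDerivAt.pow 3
  have hd : HasDerivAt (fun w => Complex.exp (a * w) / g w ^ 3) _ z := hE.div hg3 (pow_ne_zero 3 hz0)
  show deriv (F a) z = _
  rw [show F a = fun w => Complex.exp (a * w) / g w ^ 3 from rfl, hd.deriv]
  push_cast
  ring

lemma deriv2_F_cc (a : ℂ) :
    deriv (deriv (F a)) cc = Complex.exp (a * cc) * (-a^2 + 3*a - 2) := by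
  rw [(deriv_F_ev a).deriv_eq]
  have hgd : HasDerivAt g (-(1/2)) cc := by
    have := analyticAt_g.differentiableAt.hasDerivAt
    rwa [deriv_g_cc] at this
  have hdgd : HasDerivAt (deriv g) (-(1/3)) cc := by
    have := (analyticAt_deriv analyticAt_g).differentiableAt.hasDerivAt
    rwa [deriv2_g_cc] at this
  have hE : HasDerivAt (fun w => Complex.exp (a * w)) (Complex.exp (a * cc) * a) cc :=
    by simpa using ((hasDerivAt_id cc).const_mul a).cexp
  have hN : HasDerivAt (fun z => Complex.exp (a * z) * a * g z ^ 3
      - Complex.exp (a * z) * (3 * g z ^ 2 * deriv g z)) _ cc :=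
    ((hE.mul_const a).mul (hgd.pow 3)).sub
      (hE.mul (((hgd.pow 2).const_mul 3).mul hdgd))
  have hD : HasDerivAt (fun z => (g z ^ 3) ^ 2) _ cc := (hgd.pow 3).pow 2
  have hQ : HasDerivAt (fun z => (Complex.exp (a * z) * a * g z ^ 3
      - Complex.exp (a * z) * (3 * g z ^ 2 * deriv g z)) / (g z ^ 3) ^ 2) _ cc :=
    hN.div hD (by rw [g_cc]; norm_num)
  rw [hQ.deriv]
  simp only [Pi.pow_apply]
  rw [g_cc, deriv_g_cc]
  push_cast
  field_simp
  ring

lemma HH_cc (a : ℂ) : HH a cc = Complex.exp (a * cc) * (-a^2 + 3*a - 2) / 2 := by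
  have hG : AnalyticAt ℂ (G a) cc := analyticAt_dslope (analyticAt_F a)
  have hkeyF : ∀ z, F a z = F a cc + (z - cc) * G a z := by
    intro z
    have h := sub_smul_dslope (F a) cc z
    simp only [smul_eq_mul] at h
    show F a z = F a cc + (z - cc) * dslope (F a) cc z
    linear_combination -h
  have e1 : deriv (F a) =ᶠ[nhds cc] fun z => G a z + (z - cc) * deriv (G a) z := by
    filter_upwards [hG.eventually_analyticAt] with z hz
    have hd : HasDerivAt (fun w => F a cc + (w - cc) * G a w)
        (1 * G a z + (z - cc) * deriv (G a) z) z :=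
      (hasDerivAt_const z _).add
        (((hasDerivAt_id z).sub_const cc).mul hz.differentiableAt.hasDerivAt) |>.congr_deriv (by simp only [id_eq]; ring)
    rw [show F a = fun w => F a cc + (w - cc) * G a w from funext hkeyF, hd.deriv]
    ring
  have e2 : deriv (deriv (F a)) cc = 2 * deriv (G a) cc := by
    rw [e1.deriv_eq]
    have hdG : AnalyticAt ℂ (deriv (G a)) cc := analyticAt_deriv hG
    have hd : HasDerivAt (fun z => G a z + (z - cc) * deriv (G a) z)
        (deriv (G a) cc + (1 * deriv (G a) cc + (cc - cc) * deriv (deriv (G a)) cc)) cc :=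
      hG.differentiableAt.hasDerivAt.add
        (((hasDerivAt_id cc).sub_const cc).mul hdG.differentiableAt.hasDerivAt)
    rw [hd.deriv]
    ring
  have e3 := deriv2_F_cc a
  rw [e2] at e3
  show dslope (G a) cc cc = _
  rw [dslope_same]
  linear_combination e3 / 2


lemma HH_cc' (a : ℂ) :
    HH a cc = -((2 - a) * (1 - a) / 2) * Complex.exp (Complex.I * a * (Real.pi : ℂ)) := by
  rw [HH_cc, show a * cc = Complex.I * a * (Real.pi : ℂ) by rw [cc]; ring]
  ring

lemma analyticAt_KK (a : ℂ) : AnalyticAt ℂ (KK a) cc :=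
  analyticAt_dslope (analyticAt_dslope (analyticAt_dslope (analyticAt_F a)))

lemma decomp (a : ℂ) {z : ℂ} (hz : z ≠ cc) :
    Complex.exp (a * z) / (Complex.exp z + 1) ^ 3
      = F a cc • (z - cc) ^ (-3 : ℤ) + (G a cc • (z - cc) ^ (-2 : ℤ)
        + (HH a cc • (z - cc)⁻¹ + KK a z)) := by
  have hzc : z - cc ≠ 0 := sub_ne_zero.mpr hz
  have hFz : F a z = F a cc + (z - cc) * G a z := by
    have h := sub_smul_dslope (F a) cc z
    simp only [smul_eq_mul] at h
    show _ = _ + (z - cc) * dslope (F a) cc z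
    linear_combination -h
  have hGz : G a z = G a cc + (z - cc) * HH a z := by
    have h := sub_smul_dslope (G a) cc z
    simp only [smul_eq_mul] at h
    show _ = _ + (z - cc) * dslope (G a) cc z
    linear_combination -h
  have hHz : HH a z = HH a cc + (z - cc) * KK a z := by
    have h := sub_smul_dslope (HH a) cc z
    simp only [smul_eq_mul] at h
    show _ = _ + (z - cc) * dslope (HH a) cc z
    linear_combination -h
  have h1 : Complex.exp (a * z) / (Complex.exp z + 1) ^ 3 = F a z / (z - cc) ^ 3 := by
    rw [key z, show F a z = Complex.exp (a * z) / g z ^ 3 from rfl, div_div, mul_pow, mul_comm ((z - cc) ^ 3)]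
  rw [h1, hFz, hGz, hHz]
  simp only [smul_eq_mul, zpow_neg, zpow_ofNat]
  field_simp

lemma circleIntegral_add' {f₁ f₂ : ℂ → ℂ} {c : ℂ} {R : ℝ} (h₁ : CircleIntegrable f₁ c R)
    (h₂ : CircleIntegrable f₂ c R) :
    (∮ z in C(c, R), (f₁ z + f₂ z)) = (∮ z in C(c, R), f₁ z) + ∮ z in C(c, R), f₂ z := by
  simp only [circleIntegral, smul_add, intervalIntegral.integral_add h₁.out h₂.out]

lemma circleIntegrable_smul {f : ℂ → ℂ} {c : ℂ} {R : ℝ} (d : ℂ) (h : CircleIntegrable f c R) :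
    CircleIntegrable (fun z => d • f z) c R := by
  simp only [smul_eq_mul]
  exact h.const_mul d

end Stmt5Aux

open Stmt5Aux in
/-- The residue of `z ↦ e^{az}/(e^z + 1)^3` at `z = iπ` is `-((2-a)(1-a)/2) e^{i a π}`,
expressed via small circle integrals: `∮_{|z - iπ| = r} f = 2πi · Res`. -/
theorem stmt5 (a : ℂ) :
    ∃ ε > 0, ∀ r : ℝ, 0 < r → r < ε →
      circleIntegral (fun z => Complex.exp (a * z) / (Complex.exp z + 1) ^ 3)
          ((Real.pi : ℂ) * I) r
        = 2 * (Real.pi : ℂ) * I * (-((2 - a) * (1 - a) / 2) * Complex.exp (I * a * (Real.pi : ℂ))) := by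
  obtain ⟨ε, hε, hball⟩ :=
    Metric.eventually_nhds_iff_ball.mp (analyticAt_KK a).eventually_analyticAt
  refine ⟨ε, hε, fun r hr hrε => ?_⟩
  rw [show ((Real.pi : ℂ) * I) = cc from rfl]
  have heq : EqOn (fun z => Complex.exp (a * z) / (Complex.exp z + 1) ^ 3)
      (fun z => F a cc • (z - cc) ^ (-3 : ℤ) + (G a cc • (z - cc) ^ (-2 : ℤ)
        + (HH a cc • (z - cc)⁻¹ + KK a z))) (sphere cc r) := by
    intro z hzs
    have hzne : z ≠ cc := by
      intro h
      rw [h] at hzs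
      rw [mem_sphere, dist_self] at hzs
      exact hr.ne hzs
    exact decomp a hzne
  rw [circleIntegral.integral_congr hr.le heq]
  have hccs : cc ∉ sphere cc |r| := by
    simp only [mem_sphere, dist_self, abs_of_pos hr]
    exact hr.ne
  have hi3 : CircleIntegrable (fun z => (z - cc) ^ (-3 : ℤ)) cc r :=
    circleIntegrable_sub_zpow_iff.mpr (Or.inr (Or.inr hccs))
  have hi2 : CircleIntegrable (fun z => (z - cc) ^ (-2 : ℤ)) cc r :=
    circleIntegrable_sub_zpow_iff.mpr (Or.inr (Or.inr hccs))
  have hi1 : CircleIntegrable (fun z => (z - cc)⁻¹) cc r := by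
    have := circleIntegrable_sub_zpow_iff (c := cc) (w := cc) (R := r) (n := -1)
    simp only [zpow_neg, zpow_one] at this
    exact this.mpr (Or.inr (Or.inr hccs))
  have hsub : Metric.closedBall cc r ⊆ Metric.ball cc ε :=
    Metric.closedBall_subset_ball hrε
  have hiK : CircleIntegrable (KK a) cc r :=
    ContinuousOn.circleIntegrable hr.le fun z hzs =>
      ((hball z (hsub (sphere_subset_closedBall hzs))).continuousAt).continuousWithinAt
  have hK0 : (∮ z in C(cc, r), KK a z) = 0 :=
    Complex.circleIntegral_eq_zero_of_differentiable_on_off_countable hr.le Set.countable_empty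
      (fun z hzb => ((hball z (hsub hzb)).continuousAt).continuousWithinAt)
      (fun z hzb => (hball z (hsub (Metric.ball_subset_closedBall hzb.1))).differentiableAt)
  have hI1 : CircleIntegrable (fun z => HH a cc • (z - cc)⁻¹ + KK a z) cc r :=
    (circleIntegrable_smul _ hi1).add hiK
  have hI2 : CircleIntegrable (fun z => G a cc • (z - cc) ^ (-2 : ℤ)
      + (HH a cc • (z - cc)⁻¹ + KK a z)) cc r :=
    (circleIntegrable_smul _ hi2).add hI1
  rw [circleIntegral_add' (circleIntegrable_smul _ hi3) hI2,
    circleIntegral_add' (circleIntegrable_smul _ hi2) hI1,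
    circleIntegral_add' (circleIntegrable_smul _ hi1) hiK,
    circleIntegral.integral_smul, circleIntegral.integral_smul, circleIntegral.integral_smul,
    circleIntegral.integral_sub_zpow_of_ne (by decide) cc cc r,
    circleIntegral.integral_sub_zpow_of_ne (by decide) cc cc r,
    circleIntegral.integral_sub_inv_of_mem_ball (Metric.mem_ball_self hr),
    hK0, HH_cc' a]
  simp only [smul_eq_mul, smul_zero, mul_zero]
  ring
end Stmt5Aux
end

section
/- Let n ≥ 1, s > n/2, ω > 0, σ > 0, and define I_j = ∫_{ℝⁿ}((2π|ξ|)^{2s}+ω)^{-j} dξ for j = 1,2,3. Then the quantity I_3 - ((2σ+1)/(2σ)) · I_2²/I_1 has the same sign as (σ - (2s - n)/n). In particular it is negative if and only if 0 < σ < 2s/n - 1. -/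
open Real MeasureTheory Module

noncomputable def gfun (n : ℕ) (s : ℝ) (ξ : EuclideanSpace ℝ (Fin n)) : ℝ :=
  (2 * π * ‖ξ‖) ^ (2 * s)

lemma gfun_nonneg {n : ℕ} {s : ℝ} (ξ : EuclideanSpace ℝ (Fin n)) : 0 ≤ gfun n s ξ :=
  Real.rpow_nonneg (by positivity) _

lemma gfun_continuous {n : ℕ} {s : ℝ} (hs : 0 < s) : Continuous (gfun n s) := by
  apply Continuous.rpow_const
  · exact continuous_const.mul continuous_norm
  · intro x; right; positivity

lemma cont_j {n : ℕ} {s t : ℝ} (hs : 0 < s) (ht : 0 < t) (j : ℕ) :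
    Continuous (fun ξ : EuclideanSpace ℝ (Fin n) => ((gfun n s ξ + t) ^ j)⁻¹) := by
  apply Continuous.inv₀
  · exact ((gfun_continuous hs).add continuous_const).pow j
  · intro x
    have := gfun_nonneg (n := n) (s := s) x
    positivity

lemma integrable1 {n : ℕ} {s t : ℝ} (hns : (n : ℝ) < 2 * s) (hs : 0 < s) (ht : 0 < t) :
    Integrable (fun ξ : EuclideanSpace ℝ (Fin n) => (gfun n s ξ + t)⁻¹) := by
  have hfr : (finrank ℝ (EuclideanSpace ℝ (Fin n)) : ℝ) < 2 * s := by
    rw [finrank_euclideanSpace_fin]; exact hns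
  have hbase : Integrable (fun ξ : EuclideanSpace ℝ (Fin n) => ((1 : ℝ) + ‖ξ‖) ^ (-(2 * s))) :=
    integrable_one_add_norm hfr
  have hA : (0:ℝ) < 2 ^ (2 * s) := Real.rpow_pos_of_pos (by norm_num) _
  have hBp : (0:ℝ) < (2 * π) ^ (2 * s) := Real.rpow_pos_of_pos (by positivity) _
  set C : ℝ := 2 ^ (2 * s) * (t⁻¹ + ((2 * π) ^ (2 * s))⁻¹) with hC
  refine (hbase.const_mul C).mono' ?_ (Filter.Eventually.of_forall fun ξ => ?_)
  · have : Continuous (fun ξ : EuclideanSpace ℝ (Fin n) => (gfun n s ξ + t)⁻¹) := by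
      simpa using cont_j (n := n) hs ht 1
    exact this.aestronglyMeasurable
  · have hr : (0:ℝ) ≤ ‖ξ‖ := norm_nonneg _
    have hg0 := gfun_nonneg (n := n) (s := s) ξ
    have hg : gfun n s ξ = (2 * π) ^ (2 * s) * ‖ξ‖ ^ (2 * s) := by
      rw [gfun, Real.mul_rpow (by positivity) hr]
    have key : (1 + ‖ξ‖) ^ (2 * s) ≤ C * (gfun n s ξ + t) := by
      rcases le_total ‖ξ‖ 1 with h1 | h1
      · have h2 : (1 + ‖ξ‖) ^ (2 * s) ≤ 2 ^ (2 * s) :=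
          Real.rpow_le_rpow (by positivity) (by linarith) (by positivity)
        have h4 : t⁻¹ * t = 1 := inv_mul_cancel₀ ht.ne'
        have hB : (0:ℝ) < ((2 * π) ^ (2 * s))⁻¹ := by positivity
        calc (1 + ‖ξ‖) ^ (2 * s) ≤ 2 ^ (2 * s) := h2
          _ ≤ C * (gfun n s ξ + t) := by
              rw [hC]
              nlinarith [mul_nonneg (inv_nonneg.2 ht.le) hg0, mul_nonneg hB.le hg0,
                mul_nonneg hB.le ht.le]
      · have h2 : (1 + ‖ξ‖) ^ (2 * s) ≤ (2 * ‖ξ‖) ^ (2 * s) :=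
          Real.rpow_le_rpow (by positivity) (by linarith) (by positivity)
        have h3 : (2 * ‖ξ‖) ^ (2 * s) = 2 ^ (2 * s) * ‖ξ‖ ^ (2 * s) :=
          Real.mul_rpow (by norm_num) hr
        have h5 : ((2 * π) ^ (2 * s))⁻¹ * gfun n s ξ = ‖ξ‖ ^ (2 * s) := by
          rw [hg, ← mul_assoc, inv_mul_cancel₀ hBp.ne', one_mul]
        calc (1 + ‖ξ‖) ^ (2 * s) ≤ 2 ^ (2 * s) * ‖ξ‖ ^ (2 * s) := by rw [← h3]; exact h2
          _ ≤ C * (gfun n s ξ + t) := by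
              rw [hC]
              nlinarith [mul_nonneg (inv_nonneg.2 ht.le) hg0,
                mul_nonneg (inv_nonneg.2 ht.le) ht.le, mul_nonneg (inv_nonneg.2 hBp.le) ht.le]
    have hgt : 0 < gfun n s ξ + t := by linarith
    have hX : (0:ℝ) < (1 + ‖ξ‖) ^ (2 * s) := Real.rpow_pos_of_pos (by positivity) _
    rw [Real.norm_eq_abs, abs_of_nonneg (by positivity), Real.rpow_neg (by positivity)]
    rw [inv_eq_one_div, inv_eq_one_div, mul_one_div, div_le_div_iff₀ hgt hX]
    linarith

lemma integrableJ {n : ℕ} {s t : ℝ} (hns : (n : ℝ) < 2 * s) (hs : 0 < s) (ht : 0 < t) :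
    ∀ j : ℕ, 1 ≤ j →
      Integrable (fun ξ : EuclideanSpace ℝ (Fin n) => ((gfun n s ξ + t) ^ j)⁻¹) := by
  intro j hj
  induction j with
  | zero => omega
  | succ k ih =>
    rcases Nat.eq_or_lt_of_le hj with h | h
    · simpa [← h] using integrable1 hns hs ht
    · have hk : 1 ≤ k := by omega
      refine ((ih hk).const_mul t⁻¹).mono'
        ((cont_j hs ht (k+1)).aestronglyMeasurable) (Filter.Eventually.of_forall fun ξ => ?_)
      have hg0 := gfun_nonneg (n := n) (s := s) ξ
      have hgt : 0 < gfun n s ξ + t := by linarith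
      rw [Real.norm_eq_abs, abs_of_nonneg (by positivity)]
      rw [pow_succ, mul_inv, mul_comm]
      have h2 : (gfun n s ξ + t)⁻¹ ≤ t⁻¹ := by
        apply inv_anti₀ ht; linarith
      exact mul_le_mul_of_nonneg_right h2 (by positivity)

lemma scaling {n : ℕ} {s t : ℝ} (hs : 0 < s) (ht : 0 < t) (j : ℕ) :
    (∫ ξ : EuclideanSpace ℝ (Fin n), ((gfun n s ξ + t) ^ j)⁻¹)
      = t ^ ((n : ℝ) / (2 * s) - j) *
        ∫ ξ : EuclideanSpace ℝ (Fin n), ((gfun n s ξ + 1) ^ j)⁻¹ := by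
  set R : ℝ := t ^ (1 / (2 * s)) with hR
  have hRpos : 0 < R := Real.rpow_pos_of_pos ht _
  have hR2s : R ^ (2 * s) = t := by
    rw [hR, ← Real.rpow_mul ht.le, one_div, inv_mul_cancel₀ (by positivity), Real.rpow_one]
  have key : ∀ ξ : EuclideanSpace ℝ (Fin n), gfun n s (R • ξ) = t * gfun n s ξ := by
    intro ξ
    rw [gfun, gfun, norm_smul, Real.norm_eq_abs, abs_of_pos hRpos,
      show 2 * π * (R * ‖ξ‖) = R * (2 * π * ‖ξ‖) by ring,
      Real.mul_rpow hRpos.le (by positivity), hR2s]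
  have hint := MeasureTheory.Measure.integral_comp_smul
      (μ := (volume : Measure (EuclideanSpace ℝ (Fin n))))
      (f := fun ξ => ((gfun n s ξ + t) ^ j)⁻¹) R
  simp only [key] at hint
  have heq : ∀ ξ : EuclideanSpace ℝ (Fin n),
      ((t * gfun n s ξ + t) ^ j)⁻¹ = (t ^ j)⁻¹ * ((gfun n s ξ + 1) ^ j)⁻¹ := by
    intro ξ
    rw [show t * gfun n s ξ + t = t * (gfun n s ξ + 1) by ring, mul_pow, mul_inv]
  simp only [heq] at hint
  rw [finrank_euclideanSpace_fin] at hint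
  have hRn : |((R ^ n)⁻¹ : ℝ)| = t ^ (-((n : ℝ) / (2 * s))) := by
    rw [abs_of_pos (by positivity), hR, ← Real.rpow_natCast (t ^ (1 / (2 * s))) n,
      ← Real.rpow_mul ht.le, ← Real.rpow_neg ht.le]
    ring_nf
  rw [hRn, smul_eq_mul] at hint
  have hpow : ((t : ℝ) ^ j)⁻¹ = t ^ (-(j : ℝ)) := by
    rw [← Real.rpow_natCast t j, ← Real.rpow_neg ht.le]
  rw [hpow] at hint
  have h2 : (t : ℝ) ^ ((n : ℝ) / (2 * s) - (j : ℝ))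
      = t ^ ((n : ℝ) / (2 * s)) * t ^ (-(j : ℝ)) := by
    rw [← Real.rpow_add ht]; ring_nf
  have h3 := congrArg (fun x => t ^ ((n : ℝ) / (2 * s)) * x) hint.symm
  simp only [← mul_assoc, ← Real.rpow_add ht] at h3
  rw [show (n : ℝ) / (2 * s) + -((n : ℝ) / (2 * s)) = 0 by ring, Real.rpow_zero, one_mul] at h3
  rw [h3, h2, mul_assoc, MeasureTheory.integral_const_mul]

lemma ball_lb {ω t : ℝ} (hω : 0 < ω) (ht : t ∈ Metric.ball ω (ω / 2)) : ω / 2 < t := by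
  rw [Metric.mem_ball, Real.dist_eq, abs_sub_lt_iff] at ht
  linarith [ht.2]

lemma derivJ {n : ℕ} {s ω : ℝ} (hns : (n : ℝ) < 2 * s) (hs : 0 < s) (hω : 0 < ω) :
    HasDerivAt (fun t => ∫ ξ : EuclideanSpace ℝ (Fin n), (gfun n s ξ + t)⁻¹)
      (-∫ ξ : EuclideanSpace ℝ (Fin n), ((gfun n s ξ + ω) ^ 2)⁻¹) ω := by
  have h := hasDerivAt_integral_of_dominated_loc_of_deriv_le (μ := volume)
      (F := fun t (ξ : EuclideanSpace ℝ (Fin n)) => (gfun n s ξ + t)⁻¹)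
      (F' := fun t (ξ : EuclideanSpace ℝ (Fin n)) => -(((gfun n s ξ + t) ^ 2)⁻¹))
      (x₀ := ω) (s := Metric.ball ω (ω / 2))
      (bound := fun ξ : EuclideanSpace ℝ (Fin n) => ((gfun n s ξ + ω / 2) ^ 2)⁻¹)
      (Metric.ball_mem_nhds ω (half_pos hω)) ?_ ?_ ?_ ?_ ?_ ?_
  · rcases h with ⟨-, h⟩
    rwa [MeasureTheory.integral_neg] at h
  · refine Filter.eventually_of_mem (Metric.ball_mem_nhds ω (half_pos hω)) fun t ht => ?_
    have htp : 0 < t := lt_trans (half_pos hω) (ball_lb hω ht)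
    have : Continuous (fun ξ : EuclideanSpace ℝ (Fin n) => (gfun n s ξ + t)⁻¹) := by
      simpa using cont_j (n := n) hs htp 1
    exact this.aestronglyMeasurable
  · exact integrable1 hns hs hω
  · exact ((cont_j hs hω 2).neg).aestronglyMeasurable
  · refine Filter.Eventually.of_forall fun ξ t ht => ?_
    have h2 : ω / 2 < t := ball_lb hω ht
    have hg0 := gfun_nonneg (n := n) (s := s) ξ
    rw [norm_neg, Real.norm_eq_abs, abs_of_nonneg (by positivity)]
    apply inv_anti₀ (by positivity)
    nlinarith
  · exact integrableJ hns hs (half_pos hω) 2 (by norm_num)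
  · refine Filter.Eventually.of_forall fun ξ t ht => ?_
    have h2 : ω / 2 < t := ball_lb hω ht
    have hg0 := gfun_nonneg (n := n) (s := s) ξ
    have htp : 0 < gfun n s ξ + t := by linarith
    have hd : HasDerivAt (fun u : ℝ => gfun n s ξ + u) 1 t := (hasDerivAt_id t).const_add _
    have := hd.inv htp.ne'
    convert this using 1
    · rfl
    · rfl
    · field_simp

lemma derivK {n : ℕ} {s ω : ℝ} (hns : (n : ℝ) < 2 * s) (hs : 0 < s) (hω : 0 < ω) :
    HasDerivAt (fun t => ∫ ξ : EuclideanSpace ℝ (Fin n), ((gfun n s ξ + t) ^ 2)⁻¹)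
      (-(2 * ∫ ξ : EuclideanSpace ℝ (Fin n), ((gfun n s ξ + ω) ^ 3)⁻¹)) ω := by
  have h := hasDerivAt_integral_of_dominated_loc_of_deriv_le (μ := volume)
      (F := fun t (ξ : EuclideanSpace ℝ (Fin n)) => ((gfun n s ξ + t) ^ 2)⁻¹)
      (F' := fun t (ξ : EuclideanSpace ℝ (Fin n)) => -(2 * ((gfun n s ξ + t) ^ 3)⁻¹))
      (x₀ := ω) (s := Metric.ball ω (ω / 2))
      (bound := fun ξ : EuclideanSpace ℝ (Fin n) => 2 * ((gfun n s ξ + ω / 2) ^ 3)⁻¹)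
      (Metric.ball_mem_nhds ω (half_pos hω)) ?_ ?_ ?_ ?_ ?_ ?_
  · rcases h with ⟨-, h⟩
    rwa [MeasureTheory.integral_neg, MeasureTheory.integral_const_mul] at h
  · refine Filter.eventually_of_mem (Metric.ball_mem_nhds ω (half_pos hω)) fun t ht => ?_
    have htp : 0 < t := lt_trans (half_pos hω) (ball_lb hω ht)
    exact (cont_j hs htp 2).aestronglyMeasurable
  · exact integrableJ hns hs hω 2 (by norm_num)
  · exact ((continuous_const.mul (cont_j hs hω 3)).neg).aestronglyMeasurable
  · refine Filter.Eventually.of_forall fun ξ t ht => ?_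
    have h2 : ω / 2 < t := ball_lb hω ht
    have hg0 := gfun_nonneg (n := n) (s := s) ξ
    have htp : 0 < gfun n s ξ + t := by linarith
    rw [norm_neg, Real.norm_eq_abs, abs_of_nonneg (by positivity)]
    have : ((gfun n s ξ + t) ^ 3)⁻¹ ≤ ((gfun n s ξ + ω / 2) ^ 3)⁻¹ := by
      apply inv_anti₀ (by positivity)
      exact pow_le_pow_left₀ (by linarith) (by linarith) 3
    linarith
  · exact (integrableJ hns hs (half_pos hω) 3 (by norm_num)).const_mul 2
  · refine Filter.Eventually.of_forall fun ξ t ht => ?_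
    have h2 : ω / 2 < t := ball_lb hω ht
    have hg0 := gfun_nonneg (n := n) (s := s) ξ
    have htp : 0 < gfun n s ξ + t := by linarith
    have hd : HasDerivAt (fun u : ℝ => gfun n s ξ + u) 1 t := (hasDerivAt_id t).const_add _
    have hd2 : HasDerivAt (fun u : ℝ => (gfun n s ξ + u) ^ 2)
        (2 * (gfun n s ξ + t) ^ 1 * 1) t := hd.pow 2
    have := hd2.inv (by positivity)
    convert this using 1
    · rfl
    · rfl
    · field_simp

lemma sign_mul_pos {c x : ℝ} (hc : 0 < c) : Real.sign (c * x) = Real.sign x := by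
  rcases lt_trichotomy x 0 with h | h | h
  · rw [Real.sign_of_neg h, Real.sign_of_neg (mul_neg_of_pos_of_neg hc h)]
  · simp [h]
  · rw [Real.sign_of_pos h, Real.sign_of_pos (mul_pos hc h)]

/-- The Vakhitov–Kolokolov quantity `I₃ - ((2σ+1)/(2σ)) I₂²/I₁` has the same sign as
`σ - (2s-n)/n`; in particular it is negative iff `0 < σ < 2s/n - 1`. -/
theorem stmt9 (n : ℕ) (hn : 1 ≤ n) (s ω σ : ℝ) (hs : (n : ℝ) / 2 < s) (hω : 0 < ω)
    (hσ : 0 < σ) (I1 I2 I3 : ℝ)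
    (hI1 : I1 = ∫ ξ : EuclideanSpace ℝ (Fin n), ((2 * π * ‖ξ‖) ^ (2 * s) + ω)⁻¹)
    (hI2 : I2 = ∫ ξ : EuclideanSpace ℝ (Fin n), (((2 * π * ‖ξ‖) ^ (2 * s) + ω) ^ 2)⁻¹)
    (hI3 : I3 = ∫ ξ : EuclideanSpace ℝ (Fin n), (((2 * π * ‖ξ‖) ^ (2 * s) + ω) ^ 3)⁻¹) :
    Real.sign (I3 - (2 * σ + 1) / (2 * σ) * I2 ^ 2 / I1)
        = Real.sign (σ - (2 * s - n) / n)
      ∧ (I3 - (2 * σ + 1) / (2 * σ) * I2 ^ 2 / I1 < 0 ↔ σ < 2 * s / n - 1) := by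
  have hs0 : 0 < s := lt_of_le_of_lt (by positivity) hs
  have hns : (n : ℝ) < 2 * s := by linarith
  have hn0 : (0:ℝ) < n := by exact_mod_cast hn
  have ha0 : 0 < (n : ℝ) / (2 * s) := by positivity
  have ha1 : (n : ℝ) / (2 * s) < 1 := by
    rw [div_lt_one (by linarith)]; exact hns
  have hI1' : I1 = ∫ ξ : EuclideanSpace ℝ (Fin n), (gfun n s ξ + ω)⁻¹ := hI1
  have hI2' : I2 = ∫ ξ : EuclideanSpace ℝ (Fin n), ((gfun n s ξ + ω) ^ 2)⁻¹ := hI2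
  have hI3' : I3 = ∫ ξ : EuclideanSpace ℝ (Fin n), ((gfun n s ξ + ω) ^ 3)⁻¹ := hI3
  set C1 : ℝ := ∫ ξ : EuclideanSpace ℝ (Fin n), (gfun n s ξ + 1)⁻¹ with hC1
  set C2 : ℝ := ∫ ξ : EuclideanSpace ℝ (Fin n), ((gfun n s ξ + 1) ^ 2)⁻¹ with hC2
  -- scaling identities
  have hJ : ∀ t : ℝ, 0 < t →
      (∫ ξ : EuclideanSpace ℝ (Fin n), (gfun n s ξ + t)⁻¹)
        = t ^ ((n : ℝ) / (2 * s) - 1) * C1 := by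
    intro t ht
    have := scaling (n := n) hs0 ht 1
    simpa [pow_one] using this
  have hK : ∀ t : ℝ, 0 < t →
      (∫ ξ : EuclideanSpace ℝ (Fin n), ((gfun n s ξ + t) ^ 2)⁻¹)
        = t ^ ((n : ℝ) / (2 * s) - 2) * C2 := by
    intro t ht
    have := scaling (n := n) hs0 ht 2
    simpa using this
  -- positivity of C1
  have hC1pos : 0 < C1 := by
    rw [hC1, MeasureTheory.integral_pos_iff_support_of_nonneg]
    · have hsupp : Function.support
          (fun ξ : EuclideanSpace ℝ (Fin n) => (gfun n s ξ + 1)⁻¹) = Set.univ := by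
        ext ξ
        have := gfun_nonneg (n := n) (s := s) ξ
        simp only [Function.mem_support, Set.mem_univ, iff_true]
        positivity
      rw [hsupp]
      exact isOpen_univ.measure_pos _ ⟨0, trivial⟩
    · intro ξ
      have := gfun_nonneg (n := n) (s := s) ξ
      positivity
    · simpa [pow_one] using integrableJ hns hs0 one_pos 1 le_rfl
  -- derivative of J at ω, two ways
  have hd1 := derivJ hns hs0 hω
  have hfor1 : HasDerivAt (fun t => ∫ ξ : EuclideanSpace ℝ (Fin n), (gfun n s ξ + t)⁻¹)
      (((n : ℝ) / (2 * s) - 1) * ω ^ ((n : ℝ) / (2 * s) - 1 - 1) * C1) ω := by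
    have hrp : HasDerivAt (fun t : ℝ => t ^ ((n : ℝ) / (2 * s) - 1) * C1)
        (((n : ℝ) / (2 * s) - 1) * ω ^ ((n : ℝ) / (2 * s) - 1 - 1) * C1) ω :=
      (Real.hasDerivAt_rpow_const (Or.inl hω.ne')).mul_const C1
    apply hrp.congr_of_eventuallyEq
    filter_upwards [Ioi_mem_nhds hω] with t ht
    exact hJ t ht
  have eK : (∫ ξ : EuclideanSpace ℝ (Fin n), ((gfun n s ξ + ω) ^ 2)⁻¹)
      = (1 - (n : ℝ) / (2 * s)) * ω ^ ((n : ℝ) / (2 * s) - 2) * C1 := by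
    have h := hd1.unique hfor1
    rw [show (n : ℝ) / (2 * s) - 1 - 1 = (n : ℝ) / (2 * s) - 2 by ring] at h
    linear_combination -h
  -- C2 in terms of C1
  have hωe2 : (0:ℝ) < ω ^ ((n : ℝ) / (2 * s) - 2) := Real.rpow_pos_of_pos hω _
  have eC2 : C2 = (1 - (n : ℝ) / (2 * s)) * C1 := by
    have h1 := (hK ω hω).symm.trans eK
    have h2 : ω ^ ((n : ℝ) / (2 * s) - 2) * C2
        = ω ^ ((n : ℝ) / (2 * s) - 2) * ((1 - (n : ℝ) / (2 * s)) * C1) := by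
      rw [h1]; ring
    exact mul_left_cancel₀ hωe2.ne' h2
  -- derivative of K at ω, two ways
  have hd2 := derivK hns hs0 hω
  have hfor2 : HasDerivAt
      (fun t => ∫ ξ : EuclideanSpace ℝ (Fin n), ((gfun n s ξ + t) ^ 2)⁻¹)
      (((n : ℝ) / (2 * s) - 2) * ω ^ ((n : ℝ) / (2 * s) - 2 - 1) * C2) ω := by
    have hrp : HasDerivAt (fun t : ℝ => t ^ ((n : ℝ) / (2 * s) - 2) * C2)
        (((n : ℝ) / (2 * s) - 2) * ω ^ ((n : ℝ) / (2 * s) - 2 - 1) * C2) ω :=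
      (Real.hasDerivAt_rpow_const (Or.inl hω.ne')).mul_const C2
    apply hrp.congr_of_eventuallyEq
    filter_upwards [Ioi_mem_nhds hω] with t ht
    exact hK t ht
  have eL : (∫ ξ : EuclideanSpace ℝ (Fin n), ((gfun n s ξ + ω) ^ 3)⁻¹)
      = (1 - (n : ℝ) / (2 * s)) * (2 - (n : ℝ) / (2 * s)) / 2
          * ω ^ ((n : ℝ) / (2 * s) - 3) * C1 := by
    have h := hd2.unique hfor2
    rw [show (n : ℝ) / (2 * s) - 2 - 1 = (n : ℝ) / (2 * s) - 3 by ring, eC2] at h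
    linear_combination (-1/2 : ℝ) * h
  -- closed forms for I1, I2, I3
  have e1 : I1 = ω ^ ((n : ℝ) / (2 * s) - 1) * C1 := by rw [hI1', hJ ω hω]
  have e2 : I2 = (1 - (n : ℝ) / (2 * s)) * ω ^ ((n : ℝ) / (2 * s) - 2) * C1 := by
    rw [hI2', eK]
  have e3 : I3 = (1 - (n : ℝ) / (2 * s)) * (2 - (n : ℝ) / (2 * s)) / 2
      * ω ^ ((n : ℝ) / (2 * s) - 3) * C1 := by rw [hI3', eL]
  -- split powers
  have hsplit1 : ω ^ ((n : ℝ) / (2 * s) - 1)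
      = ω ^ ((n : ℝ) / (2 * s) - 3) * ω ^ (2 : ℕ) := by
    rw [show (n : ℝ) / (2 * s) - 1 = ((n : ℝ) / (2 * s) - 3) + ((2:ℕ):ℝ) by push_cast; ring,
      Real.rpow_add hω, Real.rpow_natCast]
  have hsplit2 : ω ^ ((n : ℝ) / (2 * s) - 2)
      = ω ^ ((n : ℝ) / (2 * s) - 3) * ω := by
    rw [show (n : ℝ) / (2 * s) - 2 = ((n : ℝ) / (2 * s) - 3) + 1 by ring,
      Real.rpow_add hω, Real.rpow_one]
  have hP : (0:ℝ) < ω ^ ((n : ℝ) / (2 * s) - 3) := Real.rpow_pos_of_pos hω _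
  -- the key factorization
  have key : I3 - (2 * σ + 1) / (2 * σ) * I2 ^ 2 / I1
      = ((ω ^ ((n : ℝ) / (2 * s) - 3) * C1) * (1 - (n : ℝ) / (2 * s))
          * ((n : ℝ) / (2 * s)) / (2 * σ)) * (σ - (2 * s - n) / n) := by
    rw [e1, e2, e3, hsplit1, hsplit2]
    field_simp
    ring
  have hcc : 0 < (ω ^ ((n : ℝ) / (2 * s) - 3) * C1) * (1 - (n : ℝ) / (2 * s))
      * ((n : ℝ) / (2 * s)) / (2 * σ) := by
    apply div_pos _ (by linarith)
    apply mul_pos (mul_pos (mul_pos hP hC1pos) (by linarith)) ha0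
  constructor
  · rw [key]; exact sign_mul_pos hcc
  · rw [key]
    have hXiff : σ - (2 * s - n) / n < 0 ↔ σ < 2 * s / n - 1 := by
      rw [sub_div, div_self hn0.ne']
      constructor <;> intro <;> linarith
    rw [← hXiff]
    constructor
    · intro h
      by_contra hx
      push_neg at hx
      nlinarith
    · intro h
      exact mul_neg_of_pos_of_neg hcc h
end

section
/- Let n ≥ 1, ω ≠ 0, s > 0, σ > 0, and suppose φ ∈ H^s(ℝⁿ) ∩ C(ℝⁿ) is a nonzero weak solution of (-Δ)^s φ + ω φ - |φ(0)|^{2σ}φ(0)δ₀ = 0. Then either (ω > 0 and s > n/2) or (ω < 0 and s < n/2). -/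
open Real MeasureTheory ComplexConjugate Filter Metric

open scoped ContDiff in
noncomputable def myOfCompact {E : Type*} [NormedAddCommGroup E] [NormedSpace ℝ E]
    (g : E → ℝ) (hg : ContDiff ℝ ∞ g) (h'g : HasCompactSupport g) : SchwartzMap E ℂ where
  toFun := fun x => (g x : ℂ)
  smooth' := Complex.ofRealCLM.contDiff.comp hg
  decay' := by
    intro k N
    have hsm : ContDiff ℝ ∞ (fun x => (g x : ℂ)) := Complex.ofRealCLM.contDiff.comp hg
    have h1 : HasCompactSupport (fun x => (g x : ℂ)) :=
      h'g.comp_left (g := fun r : ℝ => (r : ℂ)) Complex.ofReal_zero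
    have h2 : HasCompactSupport (iteratedFDeriv ℝ N (fun x => (g x : ℂ))) :=
      h1.iteratedFDeriv N
    have h3 : HasCompactSupport (fun x => ‖x‖ ^ k * ‖iteratedFDeriv ℝ N (fun x => (g x : ℂ)) x‖) :=
      (h2.norm).mul_left
    have h4 : Continuous (fun x => ‖x‖ ^ k * ‖iteratedFDeriv ℝ N (fun x => (g x : ℂ)) x‖) :=
      (continuous_norm.pow k).mul
        ((hsm.continuous_iteratedFDeriv (mod_cast le_top)).norm)
    obtain ⟨C, hC⟩ := h4.bounded_above_of_compact_support h3
    exact ⟨C, fun x => le_trans (Real.le_norm_self _) (hC x)⟩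

open scoped ContDiff in
@[simp] lemma myOfCompact_apply {E : Type*} [NormedAddCommGroup E] [NormedSpace ℝ E]
    (g : E → ℝ) (hg : ContDiff ℝ ∞ g) (h'g : HasCompactSupport g) (x : E) :
    myOfCompact g hg h'g x = (g x : ℂ) := rfl

lemma myTendstoZero {E : Type*} [NormedAddCommGroup E] [MeasurableSpace E]
    {μ : MeasureTheory.Measure E} {F : E → ℂ} (hF : Integrable F μ) (A : ℕ → Set E)
    (hmeas : ∀ k, MeasurableSet (A k)) (hev : ∀ ξ, ∀ᶠ k in atTop, ξ ∉ A k) :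
    Tendsto (fun k => ∫ ξ in A k, ‖F ξ‖ ∂μ) atTop (nhds 0) := by
  have heq : ∀ k, ∫ ξ in A k, ‖F ξ‖ ∂μ = ∫ ξ, (A k).indicator (fun ξ => ‖F ξ‖) ξ ∂μ :=
    fun k => (integral_indicator (hmeas k)).symm
  simp only [heq]
  have h0 : (0 : ℝ) = ∫ ξ, (0 : ℝ) ∂μ := by simp
  rw [h0]
  apply tendsto_integral_of_dominated_convergence (fun ξ => ‖F ξ‖)
  · exact fun k => (hF.norm.aestronglyMeasurable).indicator (hmeas k)
  · exact hF.norm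
  · intro k
    filter_upwards with ξ
    calc ‖(A k).indicator (fun ξ => ‖F ξ‖) ξ‖ ≤ ‖‖F ξ‖‖ := norm_indicator_le_norm_self _ _
    _ = ‖F ξ‖ := norm_norm _
  · filter_upwards with ξ
    have : ∀ᶠ k in atTop, (A k).indicator (fun ξ => ‖F ξ‖) ξ = 0 := by
      filter_upwards [hev ξ] with k hk
      exact Set.indicator_of_notMem hk _
    exact Tendsto.congr' (by filter_upwards [this] with k hk; exact hk.symm) tendsto_const_nhds

lemma myRpowLip {a b u p : ℝ} (ha : 0 < a) (hp : 0 < p) (hau : a ≤ u) (hub : u ≤ b) :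
    u ^ p - a ^ p ≤ p * (a ^ (p - 1) + b ^ (p - 1)) * (u - a) := by
  rcases eq_or_lt_of_le hau with rfl | hau'
  · simp only [sub_self, mul_zero, le_refl]
  have hcont : ContinuousOn (fun x : ℝ => x ^ p) (Set.Icc a u) := by
    intro x hx
    exact ((Real.continuousAt_rpow_const x p (Or.inl (by linarith [hx.1] : x ≠ 0))).continuousWithinAt)
  have hderiv : ∀ x ∈ Set.Ioo a u, HasDerivAt (fun x : ℝ => x ^ p) (p * x ^ (p - 1)) x := by
    intro x hx
    simpa [mul_comm] using Real.hasDerivAt_rpow_const (x := x) (p := p) (Or.inl (by linarith [hx.1]))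
  obtain ⟨ζ, hζ, hslope⟩ := exists_hasDerivAt_eq_slope (fun x : ℝ => x ^ p)
    (fun x => p * x ^ (p - 1)) hau' hcont hderiv
  have hζa : a < ζ := hζ.1
  have hζb : ζ ≤ b := le_trans hζ.2.le hub
  have hbound : ζ ^ (p - 1) ≤ a ^ (p - 1) + b ^ (p - 1) := by
    rcases le_or_gt 1 p with h1 | h1
    · have : ζ ^ (p - 1) ≤ b ^ (p - 1) :=
        Real.rpow_le_rpow (by linarith) hζb (by linarith)
      have ha' : 0 ≤ a ^ (p - 1) := Real.rpow_nonneg ha.le _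
      linarith
    · have : ζ ^ (p - 1) ≤ a ^ (p - 1) :=
        Real.rpow_le_rpow_of_nonpos ha hζa.le (by linarith)
      have hb' : 0 ≤ b ^ (p - 1) := Real.rpow_nonneg (by linarith : (0:ℝ) ≤ b) _
      linarith
  have heq : u ^ p - a ^ p = p * ζ ^ (p - 1) * (u - a) := by
    have hslope' : p * ζ ^ (p - 1) = (u ^ p - a ^ p) / (u - a) := by simpa using hslope
    rw [eq_div_iff (by intro h; linarith [sub_eq_zero.mp h] : u - a ≠ 0)] at hslope'
    linarith [hslope']
  rw [heq]
  have : p * ζ ^ (p - 1) ≤ p * (a ^ (p - 1) + b ^ (p - 1)) :=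
    mul_le_mul_of_nonneg_left hbound hp.le
  exact mul_le_mul_of_nonneg_right this (by linarith)

set_option maxHeartbeats 1000000

/-- Necessary conditions for existence: if `φ ∈ H^s ∩ C` (encoded via its Fourier transform
`F`, with `φ = 𝓕⁻¹F`) is a nonzero weak solution of
`(-Δ)^s φ + ω φ - |φ(0)|^{2σ}φ(0) δ₀ = 0` with `ω ≠ 0`, then either `ω > 0` and `s > n/2`,
or `ω < 0` and `s < n/2`. -/
theorem stmt14 (n : ℕ) (hn : 1 ≤ n) (s ω σ : ℝ) (hs : 0 < s) (hω : ω ≠ 0)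
    (hσ : 0 < σ) (F : EuclideanSpace ℝ (Fin n) → ℂ)
    (hF1 : Integrable F)
    (hF2 : Integrable (fun ξ => ‖F ξ‖ ^ 2))
    (hF3 : Integrable (fun ξ => (2 * π * ‖ξ‖) ^ (2 * s) * ‖F ξ‖ ^ 2))
    (φ : EuclideanSpace ℝ (Fin n) → ℂ) (hφ : φ = FourierTransformInv.fourierInv F)
    (hφne : φ ≠ 0)
    (hweak : ∀ ψ : SchwartzMap (EuclideanSpace ℝ (Fin n)) ℂ,
      ∫ ξ, ((((2 * π * ‖ξ‖) ^ (2 * s) + ω : ℝ)) : ℂ) * F ξ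
          * conj (FourierTransform.fourier (⇑ψ : EuclideanSpace ℝ (Fin n) → ℂ) ξ)
        = ((‖φ 0‖ ^ (2 * σ) : ℝ) : ℂ) * φ 0 * conj (ψ 0)) :
    (0 < ω ∧ (n : ℝ) / 2 < s) ∨ (ω < 0 ∧ s < (n : ℝ) / 2) := by
  haveI : Nontrivial (EuclideanSpace ℝ (Fin n)) :=
    Module.nontrivial_of_finrank_pos (R := ℝ) (by rw [finrank_euclideanSpace_fin]; omega)
  set c : ℂ := ((‖φ 0‖ ^ (2 * σ) : ℝ) : ℂ) * φ 0 with hc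
  have hscont : Continuous fun ξ : (EuclideanSpace ℝ (Fin n)) => (2 * π * ‖ξ‖) ^ (2 * s) := by
    rw [continuous_iff_continuousAt]
    intro ξ
    exact (Real.continuousAt_rpow_const _ _ (Or.inr (by positivity))).comp
      ((continuous_const.mul continuous_norm).continuousAt)
  have hmcont : Continuous fun ξ : (EuclideanSpace ℝ (Fin n)) => ((2 * π * ‖ξ‖) ^ (2 * s) + ω : ℝ) :=
    hscont.add continuous_const
  -- local integrability of ξ ↦ m ξ * F ξ
  have hMF_loc : LocallyIntegrable (fun ξ : (EuclideanSpace ℝ (Fin n)) =>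
      ((((2 * π * ‖ξ‖) ^ (2 * s) + ω : ℝ)) : ℂ) * F ξ) volume := by
    rw [locallyIntegrable_iff]
    intro K hK
    have := (IntegrableOn.continuousOn_mul
      ((Complex.continuous_ofReal.comp hmcont).continuousOn)
      (hF1.integrableOn (s := K)) hK)
    simpa [Pi.mul_def] using this
  have hsub_loc : LocallyIntegrable (fun ξ : (EuclideanSpace ℝ (Fin n)) =>
      ((((2 * π * ‖ξ‖) ^ (2 * s) + ω : ℝ)) : ℂ) * F ξ - c) volume :=
    hMF_loc.sub (locallyIntegrable_const c)
  -- the distributional identity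
  have hae : ∀ᵐ ξ : (EuclideanSpace ℝ (Fin n)), ((((2 * π * ‖ξ‖) ^ (2 * s) + ω : ℝ)) : ℂ) * F ξ = c := by
    have h0 : ∀ᵐ ξ : (EuclideanSpace ℝ (Fin n)), ((((2 * π * ‖ξ‖) ^ (2 * s) + ω : ℝ)) : ℂ) * F ξ - c = 0 := by
      apply ae_eq_zero_of_integral_contDiff_smul_eq_zero hsub_loc
      intro g hg h'g
      set G : SchwartzMap (EuclideanSpace ℝ (Fin n)) ℂ := myOfCompact g hg h'g with hG
      have hGx : ∀ x, G x = (g x : ℂ) := fun x => rfl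
      set ψ : SchwartzMap (EuclideanSpace ℝ (Fin n)) ℂ := (FourierTransform.fourierCLE ℂ (SchwartzMap (EuclideanSpace ℝ (Fin n)) ℂ)).symm G with hψ
      have hFT : FourierTransform.fourier (⇑ψ : EuclideanSpace ℝ (Fin n) → ℂ) = ⇑G := by
        show ⇑(FourierTransform.fourierCLE ℂ (SchwartzMap (EuclideanSpace ℝ (Fin n)) ℂ) ψ) = ⇑G
        rw [ContinuousLinearEquiv.apply_symm_apply]
      have hψ0 : ψ 0 = ((∫ x, g x : ℝ) : ℂ) := by
        rw [hψ, FourierTransform.fourierCLE_symm_apply, SchwartzMap.fourierInv_coe, Real.fourierInv_eq]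
        simp only [inner_zero_right, AddChar.map_zero_eq_one, one_smul, hGx]
        exact integral_ofReal
      have hw := hweak ψ
      rw [hFT, hψ0] at hw
      have hw' : ∫ ξ, ((((2 * π * ‖ξ‖) ^ (2 * s) + ω : ℝ)) : ℂ) * F ξ * (g ξ : ℂ)
          = c * ((∫ x, g x : ℝ) : ℂ) := by
        simpa [hGx, Complex.conj_ofReal] using hw
      have hint1 : Integrable (fun x : (EuclideanSpace ℝ (Fin n)) => g x •
          (((((2 * π * ‖x‖) ^ (2 * s) + ω : ℝ)) : ℂ) * F x)) volume :=
        hMF_loc.integrable_smul_left_of_hasCompactSupport hg.continuous h'g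
      have hint2 : Integrable (fun x : (EuclideanSpace ℝ (Fin n)) => g x • c) volume :=
        (locallyIntegrable_const c).integrable_smul_left_of_hasCompactSupport hg.continuous h'g
      have : ∫ x : (EuclideanSpace ℝ (Fin n)), g x • (((((2 * π * ‖x‖) ^ (2 * s) + ω : ℝ)) : ℂ) * F x - c)
          = (∫ x : (EuclideanSpace ℝ (Fin n)), g x • (((((2 * π * ‖x‖) ^ (2 * s) + ω : ℝ)) : ℂ) * F x))
            - ∫ x : (EuclideanSpace ℝ (Fin n)), g x • c := by
        simp_rw [smul_sub]
        exact integral_sub hint1 hint2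
      rw [this]
      have e1 : ∫ x : (EuclideanSpace ℝ (Fin n)), g x • (((((2 * π * ‖x‖) ^ (2 * s) + ω : ℝ)) : ℂ) * F x)
          = c * ((∫ x, g x : ℝ) : ℂ) := by
        rw [← hw']
        congr 1
        funext x
        rw [Complex.real_smul]
        ring
      have e2 : ∫ x : (EuclideanSpace ℝ (Fin n)), g x • c = ((∫ x, g x : ℝ) : ℂ) * c := by
        rw [integral_smul_const, Complex.real_smul]
      rw [e1, e2]
      ring
    filter_upwards [h0] with ξ h
    exact sub_eq_zero.mp h
  -- the zero set of the symbol is null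
  have hMnull : volume {ξ : (EuclideanSpace ℝ (Fin n)) | ((2 * π * ‖ξ‖) ^ (2 * s) + ω : ℝ) = 0} = 0 := by
    refine measure_mono_null ?_
      (Measure.addHaar_sphere volume 0 ((-ω) ^ (2 * s)⁻¹ / (2 * π)))
    · intro ξ hξ
      simp only [Set.mem_setOf_eq] at hξ
      have h1 : (2 * π * ‖ξ‖) ^ (2 * s) = -ω := by linarith
      have h2 : 2 * π * ‖ξ‖ = (-ω) ^ (2 * s)⁻¹ := by
        rw [← h1, Real.rpow_rpow_inv (by positivity : (0:ℝ) ≤ 2 * π * ‖ξ‖)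
          (by positivity : 2 * s ≠ 0)]
      simp only [mem_sphere_iff_norm, sub_zero]
      rw [← h2]; field_simp
  -- φ(0) ≠ 0, i.e. c ≠ 0
  have hcne : c ≠ 0 := by
    intro hc0
    have hcompl : ∀ᵐ ξ : (EuclideanSpace ℝ (Fin n)),
        ξ ∉ {ξ : (EuclideanSpace ℝ (Fin n)) | ((2 * π * ‖ξ‖) ^ (2 * s) + ω : ℝ) = 0} :=
      measure_eq_zero_iff_ae_notMem.1 hMnull
    have hF0 : F =ᵐ[volume] 0 := by
      filter_upwards [hae, hcompl] with ξ h hne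
      rw [hc0] at h
      rcases mul_eq_zero.mp h with h' | h'
      · exact absurd (Complex.ofReal_eq_zero.mp h') hne
      · exact h'
    apply hφne
    funext x
    rw [hφ]
    show FourierTransformInv.fourierInv F x = 0
    rw [Real.fourierInv_eq]
    apply integral_eq_zero_of_ae
    filter_upwards [hF0] with v hv
    rw [hv]
    simp
  have hcpos : 0 < ‖c‖ := norm_pos_iff.mpr hcne
  -- volume of annuli
  set κ : ℝ := (volume (ball (0 : EuclideanSpace ℝ (Fin n)) 1)).toReal with hκdef
  have hκpos : 0 < κ :=
    ENNReal.toReal_pos (measure_ball_pos volume 0 one_pos).ne' measure_ball_lt_top.ne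
  have hann : ∀ r R : ℝ, 0 ≤ r → r < R →
      (volume (ball (0 : EuclideanSpace ℝ (Fin n)) R \
        closedBall (0 : EuclideanSpace ℝ (Fin n)) r)).toReal = (R ^ n - r ^ n) * κ := by
    intro r R hr hrR
    have h0R : 0 ≤ R := le_trans hr hrR.le
    rw [measure_diff (closedBall_subset_ball hrR) measurableSet_closedBall.nullMeasurableSet
      measure_closedBall_lt_top.ne,
      Measure.addHaar_ball _ _ h0R, Measure.addHaar_closedBall _ _ hr,
      finrank_euclideanSpace_fin,
      ENNReal.toReal_sub_of_le
        (mul_le_mul_left (ENNReal.ofReal_le_ofReal (pow_le_pow_left₀ hr hrR.le n)) _)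
        (ENNReal.mul_ne_top ENNReal.ofReal_ne_top measure_ball_lt_top.ne),
      ENNReal.toReal_mul, ENNReal.toReal_mul,
      ENNReal.toReal_ofReal (by positivity), ENNReal.toReal_ofReal (by positivity)]
    ring
  rcases hω.lt_or_gt with hneg | hpos
  · -- ω < 0 : contradiction
    exfalso
    set r₀ : ℝ := (-ω) ^ (2 * s)⁻¹ / (2 * π) with hr₀def
    have hr₀ : 0 < r₀ :=
      div_pos (Real.rpow_pos_of_pos (by linarith) _) (by positivity)
    have ht₀ : (2 * π * r₀) ^ (2 * s) = -ω := by
      have h2 : 2 * π * r₀ = (-ω) ^ (2 * s)⁻¹ := by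
        rw [hr₀def]; field_simp
      rw [h2, Real.rpow_inv_rpow (by linarith) (by positivity)]
    set L : ℝ := (2 * s) * ((2 * π * r₀) ^ (2 * s - 1) + (2 * (2 * π * r₀)) ^ (2 * s - 1))
      with hLdef
    have hLpos : 0 < L := by positivity
    set δ : ℕ → ℝ := fun k => r₀ / 2 ^ (k + 1) with hδdef
    have hδpos : ∀ k, 0 < δ k := fun k => by positivity
    have hδle : ∀ k, δ k ≤ r₀ := by
      intro k
      rw [hδdef]
      exact div_le_self hr₀.le (one_le_pow₀ (by norm_num))
    set A : ℕ → Set (EuclideanSpace ℝ (Fin n)) := fun k =>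
      ball (0 : EuclideanSpace ℝ (Fin n)) (r₀ + δ k) \
        closedBall (0 : EuclideanSpace ℝ (Fin n)) r₀ with hAdef
    have hAmeas : ∀ k, MeasurableSet (A k) :=
      fun k => measurableSet_ball.diff measurableSet_closedBall
    have hδto : Tendsto δ atTop (nhds 0) := by
      have h1 : Tendsto (fun k : ℕ => (2⁻¹ : ℝ) ^ k) atTop (nhds 0) :=
        tendsto_pow_atTop_nhds_zero_of_lt_one (by norm_num) (by norm_num)
      have h2 := (h1.comp (tendsto_add_atTop_nat 1)).const_mul r₀
      rw [mul_zero] at h2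
      apply h2.congr
      intro k
      simp [hδdef, Function.comp, div_eq_mul_inv, inv_pow]
    have hAev : ∀ ξ : (EuclideanSpace ℝ (Fin n)), ∀ᶠ k in atTop, ξ ∉ A k := by
      intro ξ
      by_cases hξ : ‖ξ‖ ≤ r₀
      · filter_upwards with k hmem
        exact hmem.2 (by simpa [mem_closedBall, dist_zero_right] using hξ)
      · push_neg at hξ
        have h3 : Tendsto (fun k => r₀ + δ k) atTop (nhds (r₀ + 0)) :=
          tendsto_const_nhds.add hδto
        rw [add_zero] at h3
        filter_upwards [h3.eventually_lt_const hξ] with k hk hmem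
        have := mem_ball.mp hmem.1
        rw [dist_zero_right] at this
        linarith
    have hIto := myTendstoZero hF1 A hAmeas hAev
    have hkey : ∀ k, ‖c‖ * (r₀ ^ (n - 1) * κ) * δ k ≤ (L * (2 * π) * ∫ ξ in A k, ‖F ξ‖) * δ k := by
      intro k
      have hsub1 : ∀ᵐ ξ ∂(volume.restrict (A k)), ‖c‖ ≤ (L * (2 * π * δ k)) * ‖F ξ‖ := by
        filter_upwards [ae_restrict_of_ae hae, ae_restrict_mem (hAmeas k)] with ξ h hmem
        have hnorm1 : r₀ < ‖ξ‖ := by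
          have := hmem.2
          rw [mem_closedBall, dist_zero_right] at this
          exact lt_of_not_ge this
        have hnorm2 : ‖ξ‖ < r₀ + δ k := by
          have := mem_ball.mp hmem.1
          rwa [dist_zero_right] at this
        have hmval : ((2 * π * ‖ξ‖) ^ (2 * s) + ω : ℝ)
            = (2 * π * ‖ξ‖) ^ (2 * s) - (2 * π * r₀) ^ (2 * s) := by
          rw [ht₀]; ring
        have hlip := myRpowLip (a := 2 * π * r₀) (b := 2 * (2 * π * r₀)) (u := 2 * π * ‖ξ‖)
          (p := 2 * s) (by positivity) (by positivity)
          (by nlinarith [pi_pos]) (by nlinarith [pi_pos, hδle k])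
        have hmle : (2 * π * ‖ξ‖) ^ (2 * s) - (2 * π * r₀) ^ (2 * s) ≤ L * (2 * π * δ k) := by
          calc (2 * π * ‖ξ‖) ^ (2 * s) - (2 * π * r₀) ^ (2 * s)
              ≤ L * (2 * π * ‖ξ‖ - 2 * π * r₀) := by rw [hLdef]; exact hlip
            _ ≤ L * (2 * π * δ k) := by
                apply mul_le_mul_of_nonneg_left _ hLpos.le
                nlinarith [pi_pos]
        have hmnonneg : 0 ≤ (2 * π * ‖ξ‖) ^ (2 * s) - (2 * π * r₀) ^ (2 * s) :=
          sub_nonneg.mpr (Real.rpow_le_rpow (by positivity) (by nlinarith [pi_pos]) (by positivity))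
        have hcval : ‖c‖ = |((2 * π * ‖ξ‖) ^ (2 * s) + ω : ℝ)| * ‖F ξ‖ := by
          rw [← h, norm_mul, Complex.norm_real, Real.norm_eq_abs]
        rw [hcval, hmval, abs_of_nonneg hmnonneg]
        exact mul_le_mul_of_nonneg_right hmle (norm_nonneg _)
      have hvolA : volume (A k) < ⊤ :=
        lt_of_le_of_lt (measure_mono Set.diff_subset) measure_ball_lt_top
      have hint := setIntegral_mono_ae_restrict
        (integrableOn_const hvolA.ne)
        ((hF1.norm.integrableOn).const_mul (L * (2 * π * δ k))) hsub1
      rw [setIntegral_const, integral_const_mul] at hint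
      have hvol : (volume (A k)).toReal = ((r₀ + δ k) ^ n - r₀ ^ n) * κ :=
        hann r₀ (r₀ + δ k) hr₀.le (by linarith [hδpos k])
      rw [measureReal_def, hvol, smul_eq_mul] at hint
      have hpow : r₀ ^ (n - 1) * δ k ≤ (r₀ + δ k) ^ n - r₀ ^ n := by
        obtain ⟨n', rfl⟩ : ∃ n', n = n' + 1 := ⟨n - 1, by omega⟩
        have h1 : r₀ ^ n' ≤ (r₀ + δ k) ^ n' := by
          apply pow_le_pow_left₀ hr₀.le (by linarith [hδpos k])
        have h2 : (r₀ + δ k) ^ (n' + 1) = (r₀ + δ k) ^ n' * (r₀ + δ k) := pow_succ _ _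
        have h3 : r₀ ^ n' * (r₀ + δ k) ≤ (r₀ + δ k) ^ n' * (r₀ + δ k) :=
          mul_le_mul_of_nonneg_right h1 (by linarith [hδpos k])
        have h4 : r₀ ^ (n' + 1) = r₀ ^ n' * r₀ := pow_succ _ _
        simp only [Nat.add_sub_cancel]
        nlinarith [h2, h3, h4]
      have hIk : 0 ≤ ∫ ξ in A k, ‖F ξ‖ := integral_nonneg fun ξ => norm_nonneg _
      calc ‖c‖ * (r₀ ^ (n - 1) * κ) * δ k
          = (r₀ ^ (n - 1) * δ k) * (κ * ‖c‖) := by ring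
        _ ≤ ((r₀ + δ k) ^ n - r₀ ^ n) * (κ * ‖c‖) :=
            mul_le_mul_of_nonneg_right hpow (by positivity)
        _ = ((r₀ + δ k) ^ n - r₀ ^ n) * κ * ‖c‖ := by ring
        _ ≤ L * (2 * π * δ k) * ∫ ξ in A k, ‖F ξ‖ := hint
        _ = (L * (2 * π) * ∫ ξ in A k, ‖F ξ‖) * δ k := by ring
    have hkey' : ∀ k, ‖c‖ * (r₀ ^ (n - 1) * κ) ≤ L * (2 * π) * ∫ ξ in A k, ‖F ξ‖ :=
      fun k => le_of_mul_le_mul_right (hkey k) (hδpos k)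
    have hlim : Tendsto (fun k => L * (2 * π) * ∫ ξ in A k, ‖F ξ‖) atTop (nhds (L * (2 * π) * 0)) :=
      hIto.const_mul _
    rw [mul_zero] at hlim
    have hfinal : ‖c‖ * (r₀ ^ (n - 1) * κ) ≤ 0 :=
      ge_of_tendsto hlim (Eventually.of_forall hkey')
    have : 0 < ‖c‖ * (r₀ ^ (n - 1) * κ) := mul_pos hcpos (mul_pos (pow_pos hr₀ _) hκpos)
    linarith
  · -- ω > 0
    refine Or.inl ⟨hpos, ?_⟩
    by_contra hcon
    push_neg at hcon
    have h2s : 2 * s ≤ (n : ℝ) := by linarith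
    set A : ℕ → Set (EuclideanSpace ℝ (Fin n)) := fun k =>
      ball (0 : EuclideanSpace ℝ (Fin n)) (2 ^ (k + 1)) \
        closedBall (0 : EuclideanSpace ℝ (Fin n)) (2 ^ k) with hAdef
    have hAmeas : ∀ k, MeasurableSet (A k) :=
      fun k => measurableSet_ball.diff measurableSet_closedBall
    have hAev : ∀ ξ : (EuclideanSpace ℝ (Fin n)), ∀ᶠ k in atTop, ξ ∉ A k := by
      intro ξ
      have h1 : Tendsto (fun k : ℕ => (2 : ℝ) ^ k) atTop atTop :=
        tendsto_pow_atTop_atTop_of_one_lt one_lt_two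
      filter_upwards [h1.eventually_ge_atTop ‖ξ‖] with k hk hmem
      have := hmem.2
      rw [mem_closedBall, dist_zero_right] at this
      exact this hk
    have hIto := myTendstoZero hF1 A hAmeas hAev
    have hkey : ∀ k, (‖c‖ * κ) * 2 ^ (k * n)
        ≤ (((4 * π) ^ (2 * s) + ω) * ∫ ξ in A k, ‖F ξ‖) * 2 ^ (k * n) := by
      intro k
      have hsub1 : ∀ᵐ ξ ∂(volume.restrict (A k)),
          ‖c‖ ≤ (((4 * π) ^ (2 * s) + ω) * 2 ^ (k * n)) * ‖F ξ‖ := by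
        filter_upwards [ae_restrict_of_ae hae, ae_restrict_mem (hAmeas k)] with ξ h hmem
        have hnorm2 : ‖ξ‖ < 2 ^ (k + 1) := by
          have := mem_ball.mp hmem.1
          rwa [dist_zero_right] at this
        have hcoef : ((2 * π * ‖ξ‖) ^ (2 * s) + ω : ℝ)
            ≤ ((4 * π) ^ (2 * s) + ω) * 2 ^ (k * n) := by
          have hb1 : (2 * π * ‖ξ‖) ^ (2 * s) ≤ (4 * π * 2 ^ k) ^ (2 * s) := by
            apply Real.rpow_le_rpow (by positivity) _ (by positivity)
            have : (2:ℝ) ^ (k+1) = 2 * 2 ^ k := by rw [pow_succ]; ring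
            nlinarith [pi_pos, norm_nonneg ξ]
          have hb2 : (4 * π * 2 ^ k) ^ (2 * s) = (4 * π) ^ (2 * s) * ((2:ℝ) ^ k) ^ (2 * s) :=
            Real.mul_rpow (by positivity) (by positivity)
          have hb3 : ((2:ℝ) ^ k) ^ (2 * s) ≤ ((2:ℝ) ^ k) ^ ((n : ℝ)) :=
            Real.rpow_le_rpow_of_exponent_le (one_le_pow₀ (by norm_num)) h2s
          have hb4 : ((2:ℝ) ^ k) ^ ((n : ℝ)) = 2 ^ (k * n) := by
            rw [Real.rpow_natCast, ← pow_mul]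
          have hb5 : ω ≤ ω * 2 ^ (k * n) :=
            le_mul_of_one_le_right hpos.le (one_le_pow₀ (by norm_num))
          have hb6 : (0:ℝ) ≤ (4 * π) ^ (2 * s) := by positivity
          calc ((2 * π * ‖ξ‖) ^ (2 * s) + ω : ℝ)
              ≤ (4 * π) ^ (2 * s) * 2 ^ (k * n) + ω * 2 ^ (k * n) := by
                have := hb1.trans (le_of_eq hb2)
                have h7 : ((2:ℝ) ^ k) ^ (2 * s) ≤ (2:ℝ) ^ (k * n) := hb4 ▸ hb3
                nlinarith [h7, hb6]
            _ = ((4 * π) ^ (2 * s) + ω) * 2 ^ (k * n) := by ring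
        have hcval : ‖c‖ = |((2 * π * ‖ξ‖) ^ (2 * s) + ω : ℝ)| * ‖F ξ‖ := by
          rw [← h, norm_mul, Complex.norm_real, Real.norm_eq_abs]
        have hmpos : (0:ℝ) ≤ (2 * π * ‖ξ‖) ^ (2 * s) + ω := by positivity
        rw [hcval, abs_of_nonneg hmpos]
        exact mul_le_mul_of_nonneg_right hcoef (norm_nonneg _)
      have hvolA : volume (A k) < ⊤ :=
        lt_of_le_of_lt (measure_mono Set.diff_subset) measure_ball_lt_top
      have hint := setIntegral_mono_ae_restrict
        (integrableOn_const hvolA.ne)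
        ((hF1.norm.integrableOn).const_mul _) hsub1
      rw [setIntegral_const, integral_const_mul] at hint
      have hvol : (volume (A k)).toReal = (((2:ℝ) ^ (k + 1)) ^ n - ((2:ℝ) ^ k) ^ n) * κ :=
        hann _ _ (by positivity) (by
          rw [pow_succ]
          nlinarith [pow_pos (show (0:ℝ) < 2 by norm_num) k])
      rw [measureReal_def, hvol, smul_eq_mul] at hint
      have hpow : (2:ℝ) ^ (k * n) ≤ ((2:ℝ) ^ (k + 1)) ^ n - ((2:ℝ) ^ k) ^ n := by
        rw [← pow_mul, ← pow_mul]
        have h1 : (2:ℝ) ^ (k * n + 1) ≤ (2:ℝ) ^ ((k + 1) * n) := by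
          apply pow_le_pow_right₀ one_le_two
          nlinarith [hn]
        have h2 : (2:ℝ) ^ (k * n + 1) = 2 * 2 ^ (k * n) := by rw [pow_succ]; ring
        linarith
      have hIk : 0 ≤ ∫ ξ in A k, ‖F ξ‖ := integral_nonneg fun ξ => norm_nonneg _
      have hcoefpos : (0:ℝ) < (4 * π) ^ (2 * s) + ω := by positivity
      calc (‖c‖ * κ) * 2 ^ (k * n)
          = ((2:ℝ) ^ (k * n)) * (κ * ‖c‖) := by ring
        _ ≤ (((2:ℝ) ^ (k + 1)) ^ n - ((2:ℝ) ^ k) ^ n) * (κ * ‖c‖) :=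
            mul_le_mul_of_nonneg_right hpow (by positivity)
        _ = (((2:ℝ) ^ (k + 1)) ^ n - ((2:ℝ) ^ k) ^ n) * κ * ‖c‖ := by ring
        _ ≤ (((4 * π) ^ (2 * s) + ω) * 2 ^ (k * n)) * ∫ ξ in A k, ‖F ξ‖ := hint
        _ = (((4 * π) ^ (2 * s) + ω) * ∫ ξ in A k, ‖F ξ‖) * 2 ^ (k * n) := by ring
    have hkey' : ∀ k, ‖c‖ * κ ≤ ((4 * π) ^ (2 * s) + ω) * ∫ ξ in A k, ‖F ξ‖ :=
      fun k => le_of_mul_le_mul_right (hkey k) (by positivity)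
    have hlim : Tendsto (fun k => ((4 * π) ^ (2 * s) + ω) * ∫ ξ in A k, ‖F ξ‖) atTop
        (nhds (((4 * π) ^ (2 * s) + ω) * 0)) := hIto.const_mul _
    rw [mul_zero] at hlim
    have hfinal : ‖c‖ * κ ≤ 0 := ge_of_tendsto hlim (Eventually.of_forall hkey')
    have : 0 < ‖c‖ * κ := mul_pos hcpos hκpos
    linarith
end

section
/- Let n ≥ 1, s > n/2, ω > 0, σ > 0. The function φ with Fourier transform φ̂(ξ) = (∫_{ℝⁿ}((2π|η|)^{2s}+ω)^{-1}dη)^{-(1+1/(2σ))}/((2π|ξ|)^{2s}+ω) satisfies (-Δ)^sφ + ωφ = |φ(0)|^{2σ}φ(0)δ₀ in the distributional sense, and φ(0) = (∫_{ℝⁿ}((2π|η|)^{2s}+ω)^{-1}dη)^{-1/(2σ)}. -/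
open Real MeasureTheory ComplexConjugate FourierTransform

private lemma stmt15_integrable (n : ℕ) (s ω : ℝ) (hs : (n : ℝ) / 2 < s) (hω : 0 < ω) :
    Integrable (fun η : EuclideanSpace ℝ (Fin n) =>
      ((2 * π * ‖η‖) ^ (2 * s) + ω)⁻¹) := by
  have hs0 : (0:ℝ) ≤ 2 * s := by
    have : (0:ℝ) ≤ (n : ℝ) / 2 := by positivity
    linarith
  have h2s : (n : ℝ) < 2 * s := by linarith
  have hminpos : 0 < min ω 1 := lt_min hω one_pos
  set C : ℝ := 2 ^ (2 * s) * (min ω 1)⁻¹ with hC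
  have hCpos : 0 < C := by positivity
  have base : Integrable (fun x : EuclideanSpace ℝ (Fin n) => ((1 + ‖x‖) ^ (2 * s))⁻¹) := by
    have base' : Integrable (fun x : EuclideanSpace ℝ (Fin n) => (1 + ‖x‖) ^ (-(2 * s))) :=
      integrable_one_add_norm (by rw [finrank_euclideanSpace_fin]; exact h2s)
    exact base'.congr (Filter.Eventually.of_forall fun x =>
      Real.rpow_neg (by positivity) _)
  refine (base.const_mul C).mono' ?_ ?_
  · apply Continuous.aestronglyMeasurable
    refine Continuous.inv₀ ?_ fun x => by positivity
    exact ((continuous_const.mul continuous_norm).rpow_const fun x => Or.inr hs0).add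
      continuous_const
  · refine Filter.Eventually.of_forall fun η => ?_
    set t : ℝ := ‖η‖ with htdef
    have ht : 0 ≤ t := norm_nonneg η
    have hb : 0 < (2 * π * t) ^ (2 * s) + ω := by positivity
    have ha : 0 < (1 + t) ^ (2 * s) := by positivity
    have h2pi : (1:ℝ) ≤ 2 * π := by nlinarith [pi_gt_three]
    have e1 : (1 + t) ^ (2 * s) ≤ (2 * max 1 t) ^ (2 * s) := by
      apply Real.rpow_le_rpow (by positivity) ?_ hs0
      have := le_max_left 1 t
      have := le_max_right 1 t
      linarith
    have e2 : (2 * max 1 t) ^ (2 * s) = 2 ^ (2 * s) * (max 1 t) ^ (2 * s) :=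
      Real.mul_rpow (by norm_num) (by positivity)
    have e3 : (max 1 t) ^ (2 * s) ≤ 1 + t ^ (2 * s) := by
      rcases le_total t 1 with h | h
      · rw [max_eq_left h, Real.one_rpow]
        have : (0:ℝ) ≤ t ^ (2 * s) := Real.rpow_nonneg ht _
        linarith
      · rw [max_eq_right h]
        linarith
    have e4 : t ^ (2 * s) ≤ (2 * π * t) ^ (2 * s) := by
      apply Real.rpow_le_rpow ht ?_ hs0
      nlinarith
    have e5 : 1 + t ^ (2 * s) ≤ (min ω 1)⁻¹ * ((2 * π * t) ^ (2 * s) + ω) := by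
      rw [← div_eq_inv_mul, le_div_iff₀ hminpos]
      have h1 : min ω 1 ≤ ω := min_le_left _ _
      have h2 : min ω 1 * t ^ (2 * s) ≤ t ^ (2 * s) := by
        have := Real.rpow_nonneg ht (2 * s)
        nlinarith [min_le_right ω 1]
      nlinarith
    have key : (1 + t) ^ (2 * s) ≤ C * ((2 * π * t) ^ (2 * s) + ω) := by
      calc (1 + t) ^ (2 * s) ≤ 2 ^ (2 * s) * (max 1 t) ^ (2 * s) := by rw [← e2]; exact e1
        _ ≤ 2 ^ (2 * s) * (1 + t ^ (2 * s)) := by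
            apply mul_le_mul_of_nonneg_left e3 (by positivity)
        _ ≤ 2 ^ (2 * s) * ((min ω 1)⁻¹ * ((2 * π * t) ^ (2 * s) + ω)) := by
            apply mul_le_mul_of_nonneg_left e5 (by positivity)
        _ = C * ((2 * π * t) ^ (2 * s) + ω) := by rw [hC]; ring
    have hfin : ‖((2 * π * t) ^ (2 * s) + ω)⁻¹‖ = ((2 * π * t) ^ (2 * s) + ω)⁻¹ := by
      rw [Real.norm_eq_abs, abs_of_pos (inv_pos.mpr hb)]
    rw [hfin]
    calc ((2 * π * t) ^ (2 * s) + ω)⁻¹ ≤ ((1 + t) ^ (2 * s) / C)⁻¹ := by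
          apply inv_anti₀ (by positivity)
          rw [div_le_iff₀ hCpos]
          linarith [key]
      _ = C * ((1 + t) ^ (2 * s))⁻¹ := by
          rw [inv_div]
          ring

/-- The explicit standing wave profile: the function `φ` with Fourier transform
`φ̂(ξ) = (∫ ((2π|η|)^{2s}+ω)⁻¹ dη)^{-(1+1/(2σ))}/((2π|ξ|)^{2s}+ω)` satisfies
`(-Δ)^s φ + ω φ = |φ(0)|^{2σ}φ(0) δ₀` in the distributional sense, and
`φ(0) = (∫ ((2π|η|)^{2s}+ω)⁻¹ dη)^{-1/(2σ)}`. -/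
theorem stmt15 (n : ℕ) (hn : 1 ≤ n) (s ω σ : ℝ) (hs : (n : ℝ) / 2 < s) (hω : 0 < ω)
    (hσ : 0 < σ) (c : ℝ)
    (hc : c = ∫ η : EuclideanSpace ℝ (Fin n), ((2 * π * ‖η‖) ^ (2 * s) + ω)⁻¹)
    (Fhat : EuclideanSpace ℝ (Fin n) → ℂ)
    (hFhat : Fhat = fun ξ =>
      ((c ^ (-(1 + 1 / (2 * σ))) * ((2 * π * ‖ξ‖) ^ (2 * s) + ω)⁻¹ : ℝ) : ℂ))
    (φ : EuclideanSpace ℝ (Fin n) → ℂ) (hφ : φ = FourierTransformInv.fourierInv Fhat) :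
    (∀ ψ : SchwartzMap (EuclideanSpace ℝ (Fin n)) ℂ,
        ∫ ξ, ((((2 * π * ‖ξ‖) ^ (2 * s) + ω : ℝ)) : ℂ) * Fhat ξ
            * conj (FourierTransform.fourier (⇑ψ) ξ)
          = ((‖φ 0‖ ^ (2 * σ) : ℝ) : ℂ) * φ 0 * conj (ψ 0))
      ∧ φ 0 = ((c ^ (-(1 / (2 * σ))) : ℝ) : ℂ) := by
  have hA : ∀ ξ : EuclideanSpace ℝ (Fin n), 0 < (2 * π * ‖ξ‖) ^ (2 * s) + ω := fun ξ => by
    positivity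
  have hInt := stmt15_integrable n s ω hs hω
  -- positivity of c
  have hcpos : 0 < c := by
    rw [hc]
    rw [integral_pos_iff_support_of_nonneg (fun ξ => by positivity) hInt]
    have hsupp : (Function.support fun η : EuclideanSpace ℝ (Fin n) =>
        ((2 * π * ‖η‖) ^ (2 * s) + ω)⁻¹) = Set.univ :=
      Set.eq_univ_of_forall fun η => inv_ne_zero (hA η).ne'
    rw [hsupp]
    exact isOpen_univ.measure_pos volume Set.univ_nonempty
  set k : ℝ := c ^ (-(1 + 1 / (2 * σ))) with hk
  -- φ 0
  have hφ0 : φ 0 = ((c ^ (-(1 / (2 * σ))) : ℝ) : ℂ) := by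
    rw [hφ, Real.fourierInv_eq]
    simp only [inner_zero_right, AddChar.map_zero_eq_one, one_smul]
    simp only [hFhat]
    have hr : (∫ v : EuclideanSpace ℝ (Fin n), k * ((2 * π * ‖v‖) ^ (2 * s) + ω)⁻¹)
        = c ^ (-(1 / (2 * σ))) := by
      rw [MeasureTheory.integral_const_mul, ← hc, hk, ← Real.rpow_add_one hcpos.ne']
      congr 1
      ring
    rw [← hr]
    exact integral_ofReal
  refine ⟨fun ψ => ?_, hφ0⟩
  have hψint : Integrable (⇑ψ) := ψ.integrable (μ := volume)
  have hFψint : Integrable (𝓕 ⇑ψ) := by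
    have := (SchwartzMap.fourierTransformCLM ℂ ψ).integrable (μ := volume)
    rwa [SchwartzMap.fourierTransformCLM_apply, SchwartzMap.fourier_coe] at this
  have hinv : 𝓕⁻ (𝓕 ⇑ψ) 0 = ψ 0 :=
    hψint.fourierInv_fourier_eq hFψint ψ.continuous.continuousAt
  have hint0 : ∫ ξ, 𝓕 (⇑ψ) ξ = ψ 0 := by
    rw [← hinv, Real.fourierInv_eq]
    simp only [inner_zero_right, AddChar.map_zero_eq_one, one_smul]
  have hpt : ∀ ξ : EuclideanSpace ℝ (Fin n),
      ((((2 * π * ‖ξ‖) ^ (2 * s) + ω : ℝ)) : ℂ) * Fhat ξ * conj (𝓕 (⇑ψ) ξ)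
        = (k : ℂ) * conj (𝓕 (⇑ψ) ξ) := by
    intro ξ
    rw [hFhat]
    congr 1
    rw [← Complex.ofReal_mul]
    congr 1
    field_simp
  calc ∫ ξ, ((((2 * π * ‖ξ‖) ^ (2 * s) + ω : ℝ)) : ℂ) * Fhat ξ * conj (𝓕 (⇑ψ) ξ)
      = ∫ ξ, (k : ℂ) * conj (𝓕 (⇑ψ) ξ) := by
        exact integral_congr_ae (Filter.Eventually.of_forall hpt)
    _ = (k : ℂ) * ∫ ξ, conj (𝓕 (⇑ψ) ξ) := MeasureTheory.integral_const_mul _ _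
    _ = (k : ℂ) * conj (∫ ξ, 𝓕 (⇑ψ) ξ) := by rw [integral_conj]
    _ = (k : ℂ) * conj (ψ 0) := by rw [hint0]
    _ = ((‖φ 0‖ ^ (2 * σ) : ℝ) : ℂ) * φ 0 * conj (ψ 0) := by
        rw [hφ0]
        have habs : ‖((c ^ (-(1 / (2 * σ))) : ℝ) : ℂ)‖ = c ^ (-(1 / (2 * σ))) := by
          rw [Complex.norm_real, Real.norm_eq_abs, abs_of_pos (Real.rpow_pos_of_pos hcpos _)]
        rw [habs]
        have h1 : (c ^ (-(1 / (2 * σ)))) ^ (2 * σ) = c⁻¹ := by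
          rw [← Real.rpow_mul hcpos.le, ← Real.rpow_neg_one c]
          congr 1
          field_simp
        have h2 : k = c⁻¹ * c ^ (-(1 / (2 * σ))) := by
          rw [hk, ← Real.rpow_neg_one c, ← Real.rpow_add hcpos]
          congr 1
          ring
        rw [h1, h2]
        push_cast
        ring
end

section
/- Let n ≥ 1, s > n/2, ω > 0, and c²(ω) = (∫_{ℝⁿ}((2π|ξ|)^{2s}+ω)^{-1}dξ)^{-1}. For every ψ ∈ H^s(ℝⁿ) the quadratic form Q(ψ) = ‖(-Δ)^{s/2}ψ‖_{L²}² + ω‖ψ‖_{L²}² - c²(ω)|ψ(0)|² is nonnegative, and Q(ψ) = 0 for ψ = G_s^ω with Ĝ_s^ω(ξ) = ((2π|ξ|)^{2s}+ω)^{-1}. -/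
open Real MeasureTheory

/-- Nonnegativity of the quadratic form of `L₋ = (-Δ)^s + ω - c²(ω)δ₀` on `H^s`, expressed
on the Fourier side (with `ψ = 𝓕⁻¹F`, so `ψ(0) = ∫F` and
`‖(-Δ)^{s/2}ψ‖² + ω‖ψ‖² = ∫((2π|ξ|)^{2s}+ω)|F|²`), together with the equality case for the
Green's function `G_s^ω` with `Ĝ(ξ) = ((2π|ξ|)^{2s}+ω)⁻¹`. -/
theorem stmt18 (n : ℕ) (hn : 1 ≤ n) (s ω : ℝ) (hs : (n : ℝ) / 2 < s) (hω : 0 < ω)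
    (c2 : ℝ)
    (hc2 : c2 = (∫ ξ : EuclideanSpace ℝ (Fin n), ((2 * π * ‖ξ‖) ^ (2 * s) + ω)⁻¹)⁻¹) :
    (∀ F : EuclideanSpace ℝ (Fin n) → ℂ, Integrable F →
        Integrable (fun ξ => ((2 * π * ‖ξ‖) ^ (2 * s) + ω) * ‖F ξ‖ ^ 2) →
        c2 * ‖∫ ξ, F ξ‖ ^ 2
          ≤ ∫ ξ, ((2 * π * ‖ξ‖) ^ (2 * s) + ω) * ‖F ξ‖ ^ 2)
      ∧ (∫ ξ : EuclideanSpace ℝ (Fin n),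
            ((2 * π * ‖ξ‖) ^ (2 * s) + ω) * (((2 * π * ‖ξ‖) ^ (2 * s) + ω)⁻¹) ^ 2)
          = c2 * (∫ ξ : EuclideanSpace ℝ (Fin n), ((2 * π * ‖ξ‖) ^ (2 * s) + ω)⁻¹) ^ 2 := by
  set w : EuclideanSpace ℝ (Fin n) → ℝ := fun ξ => (2 * π * ‖ξ‖) ^ (2 * s) + ω with hw
  have hwpos : ∀ ξ, 0 < w ξ := fun ξ => by
    have : (0:ℝ) ≤ (2 * π * ‖ξ‖) ^ (2 * s) := Real.rpow_nonneg (by positivity) _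
    simp only [hw]; linarith
  have hn1 : (1:ℝ) ≤ (n:ℝ) := by exact_mod_cast hn
  have hspos : (0:ℝ) ≤ 2 * s := by linarith
  have hwcont : Continuous w := by
    apply Continuous.add _ continuous_const
    exact (continuous_const.mul continuous_norm).rpow_const (fun x => Or.inr hspos)
  set I : ℝ := ∫ ξ : EuclideanSpace ℝ (Fin n), (w ξ)⁻¹ with hI
  have hInn : 0 ≤ I := integral_nonneg fun ξ => (inv_pos.2 (hwpos ξ)).le
  constructor
  · intro F hF hFw
    have hRHSnn : 0 ≤ ∫ ξ, w ξ * ‖F ξ‖ ^ 2 :=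
      integral_nonneg fun ξ => by positivity
    by_cases hInt : Integrable (fun ξ : EuclideanSpace ℝ (Fin n) => (w ξ)⁻¹)
    · -- positive case: Cauchy–Schwarz
      have hIpos : 0 < I := by
        rw [hI, integral_pos_iff_support_of_nonneg (fun ξ => (inv_pos.2 (hwpos ξ)).le) hInt]
        have : Function.support (fun ξ : EuclideanSpace ℝ (Fin n) => (w ξ)⁻¹) = Set.univ := by
          ext ξ; simpa using (inv_pos.2 (hwpos ξ)).ne'
        rw [this]
        exact isOpen_univ.measure_pos volume ⟨0, trivial⟩
      set f : EuclideanSpace ℝ (Fin n) → ℝ := fun ξ => Real.sqrt (w ξ)⁻¹ with hf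
      set g : EuclideanSpace ℝ (Fin n) → ℝ := fun ξ => Real.sqrt (w ξ) * ‖F ξ‖ with hg
      have hfsq : ∀ ξ, f ξ ^ (2:ℝ) = (w ξ)⁻¹ := fun ξ => by
        rw [hf, Real.rpow_two, Real.sq_sqrt (inv_pos.2 (hwpos ξ)).le]
      have hgsq : ∀ ξ, g ξ ^ (2:ℝ) = w ξ * ‖F ξ‖ ^ 2 := fun ξ => by
        rw [hg, Real.rpow_two, mul_pow, Real.sq_sqrt (hwpos ξ).le]
      have hfg : ∀ ξ, f ξ * g ξ = ‖F ξ‖ := fun ξ => by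
        rw [hf, hg, ← mul_assoc, ← Real.sqrt_mul (inv_pos.2 (hwpos ξ)).le,
          inv_mul_cancel₀ (hwpos ξ).ne', Real.sqrt_one, one_mul]
      have hfm : MemLp f 2 volume := by
        rw [memLp_two_iff_integrable_sq
          (show AEStronglyMeasurable f volume from
            (hwcont.inv₀ (fun ξ => (hwpos ξ).ne')).sqrt.aestronglyMeasurable)]
        refine hInt.congr (Filter.Eventually.of_forall fun ξ => ?_)
        exact (Real.sq_sqrt (inv_pos.2 (hwpos ξ)).le).symm
      have hgms : AEStronglyMeasurable g volume :=
        hwcont.sqrt.aestronglyMeasurable.mul hF.norm.aestronglyMeasurable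
      have hgm : MemLp g 2 volume := by
        rw [memLp_two_iff_integrable_sq hgms]
        refine hFw.congr (Filter.Eventually.of_forall fun ξ => ?_)
        show w ξ * ‖F ξ‖ ^ 2 = g ξ ^ 2
        rw [hg, mul_pow, Real.sq_sqrt (hwpos ξ).le]
      have hCS := integral_mul_le_Lp_mul_Lq_of_nonneg (Real.holderConjugate_iff_eq_conjExponent
        (by norm_num) |>.2 (by norm_num) : Real.HolderConjugate 2 2)
        (Filter.Eventually.of_forall fun ξ => Real.sqrt_nonneg _)
        (Filter.Eventually.of_forall fun ξ => mul_nonneg (Real.sqrt_nonneg _) (norm_nonneg _))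
        (by simpa using hfm) (by simpa using hgm)
      change ∫ a, f a * g a ≤ (∫ a, f a ^ (2:ℝ)) ^ (1/2:ℝ) * (∫ a, g a ^ (2:ℝ)) ^ (1/2:ℝ) at hCS
      simp_rw [hfg, hfsq, hgsq] at hCS
      -- hCS : ∫ ‖F‖ ≤ (∫ w⁻¹)^(1/2) * (∫ w‖F‖²)^(1/2)
      have habs : ‖∫ ξ, F ξ‖ ≤ ∫ ξ, ‖F ξ‖ := by
        simpa using norm_integral_le_integral_norm F (μ := volume)
      have hFn : 0 ≤ ∫ ξ, ‖F ξ‖ := integral_nonneg fun ξ => norm_nonneg _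
      have hsq : (∫ ξ, ‖F ξ‖) ^ 2 ≤ I * ∫ ξ, w ξ * ‖F ξ‖ ^ 2 := by
        calc (∫ ξ, ‖F ξ‖) ^ 2 ≤ ((I ^ ((1:ℝ)/2)) * ((∫ ξ, w ξ * ‖F ξ‖ ^ 2) ^ ((1:ℝ)/2))) ^ 2 := by
              exact pow_le_pow_left₀ hFn hCS 2
          _ = I * ∫ ξ, w ξ * ‖F ξ‖ ^ 2 := by
              rw [mul_pow, ← Real.rpow_natCast (I ^ ((1:ℝ)/2)) 2,
                ← Real.rpow_natCast ((∫ ξ, w ξ * ‖F ξ‖ ^ 2) ^ ((1:ℝ)/2)) 2,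
                ← Real.rpow_mul hInn, ← Real.rpow_mul hRHSnn]
              norm_num
      have hc2I : c2 * I = 1 := by rw [hc2]; exact inv_mul_cancel₀ hIpos.ne'
      have hc2nn : 0 ≤ c2 := by rw [hc2]; positivity
      calc c2 * ‖∫ ξ, F ξ‖ ^ 2 ≤ c2 * (∫ ξ, ‖F ξ‖) ^ 2 := by
            exact mul_le_mul_of_nonneg_left (pow_le_pow_left₀ (norm_nonneg _) habs 2) hc2nn
        _ ≤ c2 * (I * ∫ ξ, w ξ * ‖F ξ‖ ^ 2) := mul_le_mul_of_nonneg_left hsq hc2nn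
        _ = (c2 * I) * ∫ ξ, w ξ * ‖F ξ‖ ^ 2 := by ring
        _ = ∫ ξ, w ξ * ‖F ξ‖ ^ 2 := by rw [hc2I, one_mul]
    · -- degenerate case: c2 = 0
      have : c2 = 0 := by rw [hc2, hI, integral_undef hInt, inv_zero]
      rw [this, zero_mul]
      exact hRHSnn
  · have heq : ∀ ξ : EuclideanSpace ℝ (Fin n), w ξ * ((w ξ)⁻¹) ^ 2 = (w ξ)⁻¹ := fun ξ => by
      field_simp
    calc (∫ ξ : EuclideanSpace ℝ (Fin n), w ξ * ((w ξ)⁻¹) ^ 2) = I := by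
          rw [hI]; exact integral_congr_ae (Filter.Eventually.of_forall fun ξ => heq ξ)
      _ = c2 * I ^ 2 := by
          rw [hc2]
          rcases eq_or_ne I 0 with h | h
          · simp [h]
          · rw [sq, ← mul_assoc, inv_mul_cancel₀ h, one_mul]
end
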